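/- arXiv:1109.0191 — 10 statements merged into one kernel-verified Lean document; each statement's English description precedes it below -/
import Mathlib

section
/- Let g ∈ Equiv.Perm (Fin n) have disjoint cycle decomposition into t cycles of lengths ℓ 1, …, ℓ t and let G = ⟨g⟩. Then dim P(G) equals the number (Set.ncard) of complex numbers x ∈ ℂ with x ≠ 1 such that x ^ (ℓ i) = 1 for some i ∈ {1, …, t}. -/
open Polynomial Matrix Finset

namespace PermPolytopeAux

variable {N : Type*} [DecidableEq N] [Fintype N]

omit [Fintype N] in
lemma permMatrix_apply (K : Type*) [Semiring K] (σ : Equiv.Perm N) (i j : N) :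
    σ.permMatrix K i j = if σ i = j then 1 else 0 := by
  simp [Equiv.Perm.permMatrix, PEquiv.toMatrix_apply, Equiv.toPEquiv_apply]

lemma permMatrix_mulVec (K : Type*) [Semiring K] (σ : Equiv.Perm N) (v : N → K) :
    σ.permMatrix K *ᵥ v = fun i => v (σ i) := by
  funext i
  simp [Matrix.mulVec, dotProduct, permMatrix_apply, Equiv.toPEquiv_apply, ite_mul]

omit [Fintype N] in
lemma permMatrix_one (K : Type*) [Semiring K] :
    (1 : Equiv.Perm N).permMatrix K = (1 : Matrix N N K) := by
  ext i j
  simp [permMatrix_apply, Equiv.toPEquiv_apply, Matrix.one_apply]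

lemma permMatrix_mul (K : Type*) [Semiring K] (σ τ : Equiv.Perm N) :
    (σ * τ).permMatrix K = τ.permMatrix K * σ.permMatrix K := by
  ext i j
  rw [Matrix.mul_apply, Finset.sum_eq_single (τ i)]
  · simp [permMatrix_apply, Equiv.toPEquiv_apply, Equiv.Perm.mul_apply]
  · intro b _ hb
    simp [permMatrix_apply, Equiv.toPEquiv_apply, Ne.symm hb]
  · simp

lemma permMatrix_pow (K : Type*) [Semiring K] (g : Equiv.Perm N) (k : ℕ) :
    (g ^ k).permMatrix K = g.permMatrix K ^ k := by
  induction k with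
  | zero => simpa using permMatrix_one (N := N) K
  | succ k ih => rw [pow_succ, permMatrix_mul, ih, ← pow_succ']

lemma finrank_span_powers {K A : Type*} [Field K] [Ring A] [Algebra K A] [Nontrivial A]
    (x : A) (hx : IsIntegral K x) :
    Module.finrank K (Submodule.span K (Set.range fun k : ℕ => x ^ k))
      = (minpoly K x).natDegree := by
  set m := minpoly K x with hm
  set D := m.natDegree with hD
  have hDpos : 0 < D := minpoly.natDegree_pos hx
  have hmonic : m.Monic := minpoly.monic hx
  have hspan : Submodule.span K (Set.range fun k : ℕ => x ^ k)
      = Submodule.span K (Set.range fun i : Fin D => x ^ (i : ℕ)) := by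
    apply le_antisymm
    · rw [Submodule.span_le]
      rintro _ ⟨k, rfl⟩
      show x ^ k ∈ _
      have haev : aeval x ((X : K[X]) ^ k %ₘ m) = x ^ k := by
        rw [Polynomial.modByMonic_eq_sub_mul_div _ m, map_sub, _root_.map_mul, hm,
          minpoly.aeval, zero_mul, sub_zero, map_pow, aeval_X]
      by_cases hr : (X : K[X]) ^ k %ₘ m = 0
      · rw [← haev, hr, map_zero]
        exact Submodule.zero_mem _
      · have hdeg : ((X : K[X]) ^ k %ₘ m).natDegree < D := by
          have h1 : ((X : K[X]) ^ k %ₘ m).degree < m.degree :=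
            Polynomial.degree_modByMonic_lt _ hmonic
          exact Polynomial.natDegree_lt_natDegree hr h1
        rw [← haev, Polynomial.aeval_eq_sum_range' hdeg]
        apply Submodule.sum_mem
        intro i hi
        exact Submodule.smul_mem _ _
          (Submodule.subset_span ⟨⟨i, Finset.mem_range.mp hi⟩, rfl⟩)
    · rw [Submodule.span_le]
      rintro _ ⟨i, rfl⟩
      exact Submodule.subset_span ⟨(i : ℕ), rfl⟩
  rw [hspan]
  have hli : LinearIndependent K (fun i : Fin D => x ^ (i : ℕ)) := by
    rw [Fintype.linearIndependent_iff]
    intro c hc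
    by_contra hne
    push_neg at hne
    obtain ⟨i₀, hi₀⟩ := hne
    set p : K[X] := ∑ i : Fin D, C (c i) * X ^ (i : ℕ) with hp
    have hpev : aeval x p = 0 := by
      rw [hp, map_sum]
      rw [← hc]
      refine Finset.sum_congr rfl fun i _ => ?_
      rw [_root_.map_mul, aeval_C, map_pow, aeval_X, Algebra.smul_def]
    have hpcoeff : ∀ j : Fin D, p.coeff (j : ℕ) = c j := by
      intro j
      rw [hp, Polynomial.finset_sum_coeff]
      rw [Finset.sum_eq_single j]
      · simp
      · intro b _ hb
        have : (b : ℕ) ≠ (j : ℕ) := fun h => hb (Fin.ext h)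
        simp [Polynomial.coeff_C_mul, Polynomial.coeff_X_pow, this.symm]
      · simp
    have hpne : p ≠ 0 := fun h => hi₀ (by rw [← hpcoeff i₀, h, Polynomial.coeff_zero])
    have hdle : m.degree ≤ p.degree := minpoly.degree_le_of_ne_zero K x hpne hpev
    have hdlt : p.natDegree ≤ D - 1 := by
      apply Polynomial.natDegree_sum_le_of_forall_le
      intro i _
      refine le_trans (Polynomial.natDegree_C_mul_le _ _) ?_
      rw [Polynomial.natDegree_X_pow]
      omega
    have : D ≤ p.natDegree := by
      have := Polynomial.natDegree_le_natDegree hdle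
      omega
    omega
  rw [finrank_span_eq_card hli, Fintype.card_fin]

end PermPolytopeAux

/-- The permutation polytope of a subgroup `G` of permutations of `Fin n`:
the convex hull of the permutation matrices of elements of `G`. -/
noncomputable def permPolytope (n : ℕ) (G : Subgroup (Equiv.Perm (Fin n))) :
    Set (Matrix (Fin n) (Fin n) ℝ) :=
  convexHull ℝ {M : Matrix (Fin n) (Fin n) ℝ | ∃ σ ∈ G, M = σ.permMatrix ℝ}

open PermPolytopeAux in
/-- The dimension of `P(⟨g⟩)` equals the number of complex numbers `x ≠ 1` which are
`ℓ i`-th roots of unity for some cycle length `ℓ i` of `g`. -/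
theorem dim_permPolytope_eq_ncard_roots_of_unity
    (n t : ℕ) (ℓ : Fin t → ℕ) (hℓ : ∀ i, 2 ≤ ℓ i)
    (g : Equiv.Perm (Fin n))
    (hg : g.cycleType = Multiset.map ℓ Finset.univ.val) :
    Module.finrank ℝ (vectorSpan ℝ (permPolytope n (Subgroup.zpowers g)))
      = Set.ncard {x : ℂ | x ≠ 1 ∧ ∃ i : Fin t, x ^ (ℓ i) = 1} := by
  classical
  rcases Nat.eq_zero_or_pos n with hn | hn
  · -- degenerate case n = 0
    subst hn
    have hg1 : g = 1 := Subsingleton.elim _ _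
    rw [hg1, Equiv.Perm.cycleType_one] at hg
    have hset : {x : ℂ | x ≠ 1 ∧ ∃ i : Fin t, x ^ (ℓ i) = 1} = ∅ := by
      ext x
      simp only [Set.mem_setOf_eq, Set.mem_empty_iff_false, iff_false, not_and]
      rintro _ ⟨i, _⟩
      have hcard := congrArg Multiset.card hg
      simp at hcard
      exact absurd i.2 (by omega)
    rw [hset, Set.ncard_empty]
    haveI : Subsingleton (Matrix (Fin 0) (Fin 0) ℝ) := by
      constructor; intro a b; ext i j; exact absurd i.2 (by omega)
    exact Module.finrank_zero_of_subsingleton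
  -- main case n ≥ 1
  haveI : Nonempty (Fin n) := ⟨⟨0, hn⟩⟩
  set A := g.permMatrix ℝ with hA
  have hpow : ∀ k : ℕ, A ^ k = (g ^ k).permMatrix ℝ := fun k => (permMatrix_pow ℝ g k).symm
  -- Step 1 : reduce to the span of `A ^ k - 1`
  have hstep1 : vectorSpan ℝ (permPolytope n (Subgroup.zpowers g))
      = Submodule.span ℝ (Set.range fun k : ℕ => A ^ k - 1) := by
    rw [permPolytope, ← direction_affineSpan, affineSpan_convexHull, direction_affineSpan]
    have hSet : {M : Matrix (Fin n) (Fin n) ℝ | ∃ σ ∈ Subgroup.zpowers g, M = σ.permMatrix ℝ}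
        = Set.range (fun k : ℕ => A ^ k) := by
      ext M
      constructor
      · rintro ⟨σ, hσ, rfl⟩
        obtain ⟨k, hk⟩ := mem_powers_iff_mem_zpowers.mpr hσ
        exact ⟨k, by rw [← hk]; simpa using hpow k⟩
      · rintro ⟨k, rfl⟩
        exact ⟨g ^ k, (Subgroup.zpowers g).pow_mem (Subgroup.mem_zpowers g) k, hpow k⟩
    rw [hSet]
    have h1mem : (1 : Matrix (Fin n) (Fin n) ℝ) ∈ Set.range (fun k : ℕ => A ^ k) :=
      ⟨0, pow_zero A⟩
    rw [vectorSpan_eq_span_vsub_set_right ℝ h1mem, ← Set.range_comp]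
    rfl
  rw [hstep1]
  set V1 := Submodule.span ℝ (Set.range fun k : ℕ => A ^ k - 1) with hV1
  let L : Matrix (Fin n) (Fin n) ℝ →ₗ[ℝ] (Fin n → ℝ) :=
    { toFun := fun M => M *ᵥ (fun _ => 1)
      map_add' := fun M N => Matrix.add_mulVec M N _
      map_smul' := fun c M => Matrix.smul_mulVec c M _ }
  have hLpow : ∀ k : ℕ, L (A ^ k) = fun _ => (1:ℝ) := by
    intro k
    show (A ^ k) *ᵥ _ = _
    rw [hpow k, PermPolytopeAux.permMatrix_mulVec]
  have hL1 : L 1 = fun _ => (1:ℝ) := by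
    show (1 : Matrix (Fin n) (Fin n) ℝ) *ᵥ _ = _
    rw [Matrix.one_mulVec]
  have hV1ker : V1 ≤ LinearMap.ker L := by
    rw [hV1, Submodule.span_le]
    rintro _ ⟨k, rfl⟩
    simp only [SetLike.mem_coe, LinearMap.mem_ker]
    rw [map_sub, hLpow, hL1, sub_self]
  have hone_not : (1 : Matrix (Fin n) (Fin n) ℝ) ∉ V1 := by
    intro h
    have := hV1ker h
    rw [LinearMap.mem_ker, hL1] at this
    exact one_ne_zero (congrFun this ⟨0, hn⟩)
  set W := Submodule.span ℝ (Set.range fun k : ℕ => A ^ k) with hWdef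
  have hWsup : W = V1 ⊔ Submodule.span ℝ {(1 : Matrix (Fin n) (Fin n) ℝ)} := by
    apply le_antisymm
    · rw [hWdef, Submodule.span_le]
      rintro _ ⟨k, rfl⟩
      show A ^ k ∈ _
      have heq : A ^ k = (A ^ k - 1) + 1 := by abel
      rw [heq]
      exact Submodule.add_mem _
        (Submodule.mem_sup_left (Submodule.subset_span ⟨k, rfl⟩))
        (Submodule.mem_sup_right (Submodule.subset_span rfl))
    · rw [sup_le_iff]
      constructor
      · rw [hV1, Submodule.span_le]
        rintro _ ⟨k, rfl⟩
        exact Submodule.sub_mem _ (Submodule.subset_span ⟨k, rfl⟩)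
          (Submodule.subset_span ⟨0, pow_zero A⟩)
      · rw [Submodule.span_le, Set.singleton_subset_iff]
        exact Submodule.subset_span ⟨0, pow_zero A⟩
  have hdisj : V1 ⊓ Submodule.span ℝ {(1 : Matrix (Fin n) (Fin n) ℝ)} = ⊥ := by
    rw [eq_bot_iff]
    rintro M ⟨hM1, hM2⟩
    obtain ⟨c, rfl⟩ := Submodule.mem_span_singleton.mp hM2
    rcases eq_or_ne c 0 with rfl | hc
    · simp
    · exact absurd (by simpa [smul_smul, inv_mul_cancel₀ hc] using V1.smul_mem c⁻¹ hM1)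
        hone_not
  have h1ne : (1 : Matrix (Fin n) (Fin n) ℝ) ≠ 0 := by
    intro h
    have h2 : (1 : Matrix (Fin n) (Fin n) ℝ) ⟨0,hn⟩ ⟨0,hn⟩ = 0 := by rw [h]; rfl
    rw [Matrix.one_apply_eq] at h2
    exact one_ne_zero h2
  have hfr : Module.finrank ℝ W = Module.finrank ℝ V1 + 1 := by
    have hh := Submodule.finrank_sup_add_finrank_inf_eq V1
      (Submodule.span ℝ {(1 : Matrix (Fin n) (Fin n) ℝ)})
    rw [hdisj, ← hWsup, finrank_bot, finrank_span_singleton h1ne] at hh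
    omega
  -- minimal polynomial
  have hInt : IsIntegral ℝ A := IsIntegral.of_finite ℝ A
  set m := minpoly ℝ A with hm
  set D := m.natDegree with hDdef
  have hDpos : 0 < D := minpoly.natDegree_pos hInt
  have hWD : Module.finrank ℝ W = D := finrank_span_powers A hInt
  set d := orderOf g with hd
  have hd0 : d ≠ 0 := (orderOf_pos g).ne'
  have hmd : m ∣ (X : ℝ[X]) ^ d - 1 := by
    apply minpoly.dvd
    rw [map_sub, map_pow, aeval_X, _root_.map_one, hpow d, pow_orderOf_eq_one, PermPolytopeAux.permMatrix_one,
      sub_self]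
  have hsep : m.Separable := by
    refine Polynomial.Separable.of_dvd ?_ hmd
    have := Polynomial.separable_X_pow_sub_C (1 : ℝ)
      (by exact_mod_cast (Nat.cast_ne_zero (R := ℝ)).mpr hd0) one_ne_zero
    simpa using this
  -- the annihilating polynomial built from the cycle lengths
  set Q := (∏ i : Fin t, ((X : ℝ[X]) ^ ℓ i - 1)) * ((X : ℝ[X]) - 1) with hQdef
  have hcycfact : ∀ k : Fin n, ∃ c : ℕ, (g ^ c) k = k ∧ ((X : ℝ[X]) ^ c - 1) ∣ Q := by
    intro k
    by_cases hk : g k = k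
    · refine ⟨1, by simpa using hk, ?_⟩
      rw [pow_one]
      exact dvd_mul_left _ _
    · set c := (g.cycleOf k).support.card with hc
      have hcyc : g.cycleOf k ∈ g.cycleFactorsFinset :=
        Equiv.Perm.cycleOf_mem_cycleFactorsFinset_iff.mpr (Equiv.Perm.mem_support.mpr hk)
      have hmemct : c ∈ g.cycleType := by
        rw [Equiv.Perm.cycleType_def]
        exact Multiset.mem_map_of_mem _ hcyc
      rw [hg] at hmemct
      obtain ⟨i, _, hi⟩ := Multiset.mem_map.mp hmemct
      refine ⟨c, ?_, ?_⟩
      · have hcord : c = orderOf (g.cycleOf k) :=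
          ((Equiv.Perm.isCycle_cycleOf g hk).orderOf).symm
        rw [← Equiv.Perm.cycleOf_pow_apply_self, hcord, pow_orderOf_eq_one]
        rfl
      · rw [← hi]
        exact dvd_mul_of_dvd_left (Finset.dvd_prod_of_mem _ (Finset.mem_univ i)) _
  have hQ0 : aeval A Q = 0 := by
    have hcol : ∀ k : Fin n, (aeval A Q) *ᵥ Pi.single k 1 = 0 := by
      intro k
      obtain ⟨c, hgc, hdvd⟩ := hcycfact k
      obtain ⟨q, hq⟩ := hdvd
      have hfac : aeval A Q = aeval A q * (A ^ c - 1) := by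
        rw [hq, mul_comm, _root_.map_mul, map_sub, map_pow, aeval_X, _root_.map_one]
      rw [hfac, ← Matrix.mulVec_mulVec]
      have hz : (A ^ c - 1) *ᵥ Pi.single k 1 = 0 := by
        rw [Matrix.sub_mulVec, hpow c, PermPolytopeAux.permMatrix_mulVec, Matrix.one_mulVec]
        funext i
        have hgi : ((g ^ c) i = k) ↔ (i = k) := by
          constructor
          · intro h
            exact (g ^ c).injective (by rw [h, hgc])
          · rintro rfl
            exact hgc
        simp only [Pi.sub_apply, Pi.zero_apply, Pi.single_apply]
        rw [if_congr hgi rfl rfl, sub_self]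
      rw [hz, Matrix.mulVec_zero]
    ext i k
    have hck := congrFun (hcol k) i
    rw [Matrix.mulVec_single] at hck
    simpa using hck
  have hmdvdQ : m ∣ Q := minpoly.dvd ℝ A hQ0
  -- pass to ℂ
  set B := g.permMatrix ℂ with hB
  set mC := m.map (algebraMap ℝ ℂ) with hmC
  have hmne : m ≠ 0 := minpoly.ne_zero hInt
  have hmCne : mC ≠ 0 := by
    rw [hmC]
    exact Polynomial.map_ne_zero hmne
  have hmonic : m.Monic := minpoly.monic hInt
  have hBm : aeval B mC = 0 := by
    let φ : Matrix (Fin n) (Fin n) ℝ →ₐ[ℝ] Matrix (Fin n) (Fin n) ℂ :=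
      (Algebra.ofId ℝ ℂ).mapMatrix
    have hφA : φ A = B := by
      ext i j
      show (algebraMap ℝ ℂ) (A i j) = B i j
      rw [hB, hA, permMatrix_apply, permMatrix_apply]
      split <;> simp
    rw [hmC, ← hφA, Polynomial.aeval_map_algebraMap, Polynomial.aeval_algHom_apply,
      minpoly.aeval, map_zero]
  have hBpow : ∀ (v : Fin n → ℂ) (x : ℂ), B *ᵥ v = x • v →
      ∀ p : ℂ[X], (aeval B p) *ᵥ v = p.eval x • v := by
    intro v x hv p
    have hk : ∀ k : ℕ, B ^ k *ᵥ v = x ^ k • v := by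
      intro k
      induction k with
      | zero => rw [pow_zero, pow_zero, Matrix.one_mulVec, one_smul]
      | succ k ih =>
        rw [pow_succ', ← Matrix.mulVec_mulVec, ih, Matrix.mulVec_smul, hv, smul_smul,
          ← pow_succ]
    induction p using Polynomial.induction_on' with
    | add p q hp hq => rw [map_add, Matrix.add_mulVec, hp, hq, eval_add, add_smul]
    | monomial k a =>
      rw [aeval_monomial, eval_monomial, ← Algebra.smul_def, Matrix.smul_mulVec,
        hk, smul_smul]
  have heig : ∀ x : ℂ, (x = 1 ∨ ∃ i, x ^ ℓ i = 1) → mC.eval x = 0 := by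
    intro x hx
    obtain ⟨v, hv0, hv⟩ : ∃ v : Fin n → ℂ, v ≠ 0 ∧ B *ᵥ v = x • v := by
      rcases hx with rfl | ⟨i, hxi⟩
      · refine ⟨fun _ => 1, ?_, ?_⟩
        · intro h
          exact one_ne_zero (congrFun h ⟨0, hn⟩)
        · rw [hB, PermPolytopeAux.permMatrix_mulVec]
          funext j
          simp
      · -- eigenvector supported on a cycle of length ℓ i
        have hmem : (ℓ i) ∈ g.cycleType := by
          rw [hg]
          exact Multiset.mem_map_of_mem ℓ (Finset.mem_univ i)
        rw [Equiv.Perm.cycleType_def] at hmem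
        obtain ⟨c, hcmem, hccard⟩ := Multiset.mem_map.mp hmem
        have hcmem' : c ∈ g.cycleFactorsFinset := hcmem
        obtain ⟨hciscyc, hcg⟩ := Equiv.Perm.mem_cycleFactorsFinset_iff.mp hcmem'
        have hccard' : c.support.card = ℓ i := hccard
        obtain ⟨a, ha⟩ : c.support.Nonempty :=
          Finset.card_pos.mp (by rw [hccard']; have := hℓ i; omega)
        have hga : ∀ mm : ℕ, (g ^ mm) a = (c ^ mm) a ∧ (c ^ mm) a ∈ c.support := by
          intro mm
          induction mm with
          | zero => simpa using ha
          | succ mm ih =>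
            obtain ⟨ih1, ih2⟩ := ih
            refine ⟨?_, ?_⟩
            · rw [pow_succ', pow_succ', Equiv.Perm.mul_apply, Equiv.Perm.mul_apply, ih1,
                ← hcg _ ih2]
            · rw [pow_succ', Equiv.Perm.mul_apply]
              exact Equiv.Perm.apply_mem_support.mpr ih2
        have horder : orderOf c = ℓ i := by rw [hciscyc.orderOf]; exact hccard'
        have hca : (c ^ ℓ i) a = a := by rw [← horder, pow_orderOf_eq_one]; rfl
        have hcane : ∀ mm : ℕ, 0 < mm → mm < ℓ i → (c ^ mm) a ≠ a := by
          intro mm h1 h2 heq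
          have hfix : c a ≠ a := Equiv.Perm.mem_support.mp ha
          have hc1 : c ^ mm = 1 := (hciscyc.pow_eq_one_iff' hfix).mpr heq
          have hdvd := orderOf_dvd_of_pow_eq_one hc1
          rw [horder] at hdvd
          exact absurd (Nat.le_of_dvd h1 hdvd) (by omega)
        set v : Fin n → ℂ :=
          fun j => ∑ mm ∈ Finset.range (ℓ i), if (g ^ mm) a = j then x ^ mm else 0 with hvdef
        have hva : v a = 1 := by
          rw [hvdef]
          dsimp only
          rw [Finset.sum_eq_single 0]
          · simp
          · intro b hb hb0
            rw [(hga b).1]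
            have := hcane b (Nat.pos_of_ne_zero hb0) (Finset.mem_range.mp hb)
            simp [this]
          · intro h0
            exact absurd (Finset.mem_range.mpr (by have := hℓ i; omega)) h0
        refine ⟨v, ?_, ?_⟩
        · intro h
          rw [h] at hva
          exact one_ne_zero hva.symm
        · rw [hB, PermPolytopeAux.permMatrix_mulVec]
          funext j
          show v (g j) = (x • v) j
          set F : ℕ → ℂ := fun mm => if (g ^ mm) a = g j then x ^ mm else 0 with hF
          have hgl : (g ^ ℓ i) a = a := by rw [(hga (ℓ i)).1, hca]
          have hFl : F (ℓ i) = F 0 := by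
            simp only [hF, hgl, pow_zero, hxi, Equiv.Perm.coe_one, id_eq]
          have e1 := Finset.sum_range_succ' F (ℓ i)
          have e2 := Finset.sum_range_succ F (ℓ i)
          have e3 : ∑ mm ∈ Finset.range (ℓ i), F (mm + 1)
              = ∑ mm ∈ Finset.range (ℓ i), F mm := by
            have h12 := e1.symm.trans e2
            rw [hFl] at h12
            exact add_right_cancel h12
          have hR : (x • v) j = ∑ mm ∈ Finset.range (ℓ i), F (mm + 1) := by
            show x * v j = _
            rw [hvdef]
            dsimp only
            rw [Finset.mul_sum]
            refine Finset.sum_congr rfl fun mm _ => ?_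
            rw [mul_ite, mul_zero, hF]
            have hiff : ((g ^ (mm + 1)) a = g j) ↔ ((g ^ mm) a = j) := by
              rw [pow_succ', Equiv.Perm.mul_apply]
              exact Equiv.apply_eq_iff_eq g
            rw [if_congr hiff.symm (pow_succ' x mm).symm rfl]
          rw [hR, e3]
    have h0 := hBpow v x hv mC
    rw [hBm, Matrix.zero_mulVec] at h0
    rcases smul_eq_zero.mp h0.symm with h | h
    · exact h
    · exact absurd h hv0
  -- the set of roots of mC
  set T := mC.roots.toFinset with hT
  have hTset : (T : Set ℂ) = {x : ℂ | x = 1 ∨ ∃ i, x ^ ℓ i = 1} := by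
    ext x
    simp only [hT, Multiset.mem_toFinset, Finset.mem_coe, Set.mem_setOf_eq]
    rw [Polynomial.mem_roots hmCne]
    constructor
    · intro hroot
      have hQC : mC ∣ Q.map (algebraMap ℝ ℂ) := Polynomial.map_dvd _ hmdvdQ
      have hxQ : (Q.map (algebraMap ℝ ℂ)).eval x = 0 := by
        obtain ⟨q, hq⟩ := hQC
        rw [hq, eval_mul, hroot, zero_mul]
      rw [hQdef] at hxQ
      simp only [Polynomial.map_mul, Polynomial.map_prod, Polynomial.map_sub,
        Polynomial.map_pow, Polynomial.map_X, Polynomial.map_one, eval_mul, eval_prod,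
        eval_sub, eval_pow, eval_X, eval_one] at hxQ
      rcases mul_eq_zero.mp hxQ with h | h
      · obtain ⟨i, _, hi⟩ := Finset.prod_eq_zero_iff.mp h
        exact Or.inr ⟨i, sub_eq_zero.mp hi⟩
      · exact Or.inl (sub_eq_zero.mp h)
    · intro hx
      exact heig x hx
  have hTcard : T.card = D := by
    have hnd : mC.roots.Nodup := Polynomial.nodup_roots (hsep.map (f := algebraMap ℝ ℂ))
    rw [hT, Multiset.toFinset_card_eq_card_iff_nodup.mpr hnd]
    have hsplit : mC.Splits := IsAlgClosed.splits mC
    rw [(Polynomial.splits_iff_card_roots).mp hsplit, hmC, hmonic.natDegree_map]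
  have h1T : (1 : ℂ) ∈ T := by
    have h1 : (1:ℂ) ∈ (T : Set ℂ) := by rw [hTset]; exact Or.inl rfl
    exact_mod_cast h1
  have hsetT : {x : ℂ | x ≠ 1 ∧ ∃ i : Fin t, x ^ ℓ i = 1} = ↑(T.erase 1) := by
    ext x
    simp only [Set.mem_setOf_eq, Finset.coe_erase, Set.mem_diff, Set.mem_singleton_iff]
    constructor
    · rintro ⟨h1, h2⟩
      refine ⟨?_, h1⟩
      show x ∈ (T : Set ℂ)
      rw [hTset]
      exact Or.inr h2
    · rintro ⟨h1, h2⟩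
      have hxT : x ∈ (T : Set ℂ) := h1
      rw [hTset] at hxT
      rcases hxT with h | h
      · exact absurd h h2
      · exact ⟨h2, h⟩
  rw [hsetT, Set.ncard_coe_finset, Finset.card_erase_of_mem h1T, hTcard]
  omega
end

section
/- Let g ∈ Equiv.Perm (Fin n) have disjoint cycle decomposition into t cycles of lengths ℓ 1, …, ℓ t, let G = ⟨g⟩ and d = orderOf g. Then max(ℓ i − 1 : i ∈ {1, …, t}) ≤ dim P(G) ≤ d − 1 (where the maximum over the empty index set is 0). -/
/-- `max (ℓ i - 1) ≤ dim P(⟨g⟩) ≤ d - 1` where `d = orderOf g` and the `ℓ i` are the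
cycle lengths of `g`. -/
theorem dim_permPolytope_bounds
    (n t : ℕ) (ℓ : Fin t → ℕ) (hℓ : ∀ i, 2 ≤ ℓ i)
    (g : Equiv.Perm (Fin n))
    (hg : g.cycleType = Multiset.map ℓ Finset.univ.val) :
    Finset.univ.sup (fun i : Fin t => ℓ i - 1)
        ≤ Module.finrank ℝ (vectorSpan ℝ (permPolytope n (Subgroup.zpowers g))) ∧
      Module.finrank ℝ (vectorSpan ℝ (permPolytope n (Subgroup.zpowers g)))
        ≤ orderOf g - 1 := by
  classical
  set S : Set (Matrix (Fin n) (Fin n) ℝ) :=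
    {M : Matrix (Fin n) (Fin n) ℝ | ∃ σ ∈ Subgroup.zpowers g, M = σ.permMatrix ℝ} with hS
  have hspan : vectorSpan ℝ (permPolytope n (Subgroup.zpowers g)) = vectorSpan ℝ S := by
    rw [permPolytope, ← direction_affineSpan, affineSpan_convexHull, direction_affineSpan]
  rw [hspan]
  constructor
  · -- lower bound
    apply Finset.sup_le
    intro i _
    set L := ℓ i with hLdef
    have hL2 : 2 ≤ L := hℓ i
    -- get a cycle of length L
    have hmem : L ∈ g.cycleType := by
      rw [hg]
      exact Multiset.mem_map_of_mem ℓ (Finset.mem_univ i)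
    rw [Equiv.Perm.cycleType_def, Multiset.mem_map] at hmem
    obtain ⟨c, hcmem, hcard⟩ := hmem
    rw [Finset.mem_val] at hcmem
    have hc : c.IsCycle := (Equiv.Perm.mem_cycleFactorsFinset_iff.1 hcmem).1
    have hcard : c.support.card = L := hcard
    obtain ⟨x, hx⟩ : c.support.Nonempty := by
      rw [← Finset.card_pos, hcard]; omega
    have hco : c = g.cycleOf x := Equiv.Perm.cycle_is_cycleOf hx hcmem
    have hkey : ∀ k : ℕ, (g ^ k) x = (c ^ k) x := fun k => by
      rw [hco, Equiv.Perm.cycleOf_pow_apply_self]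
    have horder : orderOf c = L := by rw [hc.orderOf, hcard]
    have hcx : c x ≠ x := Equiv.Perm.mem_support.1 hx
    have hinj : ∀ a b : ℕ, a ≤ b → b < L → (g ^ a) x = (g ^ b) x → a = b := by
      intro a b hab hbL h
      rw [hkey, hkey] at h
      have hb : (c ^ a) ((c ^ (b - a)) x) = (c ^ a) x := by
        rw [← Equiv.Perm.mul_apply, ← pow_add]
        rw [Nat.add_sub_cancel' hab]
        exact h.symm
      have h2 : (c ^ (b - a)) x = x := (c ^ a).injective hb
      have h3 : c ^ (b - a) = 1 := (hc.pow_eq_one_iff' hcx).2 h2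
      have h4 : orderOf c ∣ b - a := orderOf_dvd_of_pow_eq_one h3
      rw [horder] at h4
      have := Nat.eq_zero_of_dvd_of_lt h4
      omega
    set y : Fin (L - 1) → Fin n := fun k => (g ^ ((k : ℕ) + 1)) x with hy
    have hyne : ∀ k, y k ≠ x := by
      intro k h
      have : (0 : ℕ) = (k : ℕ) + 1 := hinj 0 ((k : ℕ) + 1) (Nat.zero_le _) (by omega) (by simpa using h.symm)
      omega
    have hyinj : Function.Injective y := by
      intro a b h
      have hab : (a : ℕ) + 1 = (b : ℕ) + 1 := by
        rcases le_total ((a : ℕ) + 1) ((b : ℕ) + 1) with h' | h'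
        · exact hinj _ _ h' (by omega) h
        · exact (hinj _ _ h' (by omega) h.symm).symm
      exact Fin.ext (by omega)
    set v : Fin (L - 1) → Matrix (Fin n) (Fin n) ℝ :=
      fun k => (g ^ ((k : ℕ) + 1)).permMatrix ℝ - (1 : Equiv.Perm (Fin n)).permMatrix ℝ with hv
    have hvmem : ∀ k, v k ∈ vectorSpan ℝ S := by
      intro k
      have h1 : (g ^ ((k : ℕ) + 1)).permMatrix ℝ ∈ S :=
        ⟨g ^ ((k : ℕ) + 1), Subgroup.npow_mem_zpowers g _, rfl⟩
      have h2 : (1 : Equiv.Perm (Fin n)).permMatrix ℝ ∈ S :=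
        ⟨1, Subgroup.one_mem _, rfl⟩
      simpa [vsub_eq_sub, hv] using vsub_mem_vectorSpan ℝ h1 h2
    have hentry : ∀ (σ : Equiv.Perm (Fin n)) (a b : Fin n),
        σ.permMatrix ℝ a b = if σ a = b then 1 else 0 := by
      intro σ a b
      simp [Equiv.Perm.permMatrix, PEquiv.toMatrix_apply, Equiv.toPEquiv_apply]
    have hli : LinearIndependent ℝ v := by
      rw [Fintype.linearIndependent_iff]
      intro a ha j
      have := congrFun (congrFun ha x) (y j)
      simp only [Finset.sum_apply, Matrix.sum_apply, Matrix.smul_apply, hv, Matrix.sub_apply,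
        hentry, Equiv.Perm.one_apply, smul_eq_mul, Matrix.zero_apply] at this
      rw [Finset.sum_congr rfl (fun k _ => ?_)] at this
      · rwa [Finset.sum_ite_eq' Finset.univ j a, if_pos (Finset.mem_univ j)] at this
      · show a k * ((if (g ^ ((k : ℕ) + 1)) x = y j then (1:ℝ) else 0) - if x = y j then 1 else 0)
          = if k = j then a k else 0
        rw [if_neg (show ¬ x = y j from fun h => hyne j h.symm), sub_zero]
        by_cases hkj : k = j
        · subst hkj
          rw [if_pos rfl, mul_one, if_pos rfl]
        · rw [if_neg (show ¬ (g ^ ((k : ℕ) + 1)) x = y j from fun h => hkj (hyinj h)),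
            mul_zero, if_neg hkj]
    have hrank : Module.finrank ℝ (Submodule.span ℝ (Set.range v)) = L - 1 := by
      rw [finrank_span_eq_card hli, Fintype.card_fin]
    calc L - 1 = Module.finrank ℝ (Submodule.span ℝ (Set.range v)) := hrank.symm
      _ ≤ Module.finrank ℝ (vectorSpan ℝ S) := Submodule.finrank_mono
          (Submodule.span_le.2 (Set.range_subset_iff.2 hvmem))
  · -- upper bound
    have hcard : Fintype.card (Subgroup.zpowers g) = (orderOf g - 1) + 1 := by
      rw [Fintype.card_zpowers]
      have : 0 < orderOf g := orderOf_pos g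
      omega
    have hrange : S = Set.range (fun σ : Subgroup.zpowers g => (σ : Equiv.Perm (Fin n)).permMatrix ℝ) := by
      ext M
      constructor
      · rintro ⟨σ, hσ, rfl⟩; exact ⟨⟨σ, hσ⟩, rfl⟩
      · rintro ⟨⟨σ, hσ⟩, rfl⟩; exact ⟨σ, hσ, rfl⟩
    rw [hrange]
    exact finrank_vectorSpan_range_le ℝ _ hcard
end

section
/- Let g ∈ Equiv.Perm (Fin n) with g ≠ 1 have disjoint cycle decomposition into t cycles of lengths ℓ 1, …, ℓ t, let G = ⟨g⟩ and d = orderOf g. Then P(G) is a simplex — i.e. the family of points (M(g^k))_{k ∈ Fin d} is affinely independent over ℝ — if and only if ℓ i = d for some i ∈ {1, …, t}, i.e. g has a cycle of length d. -/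
open Complex Finset in
lemma sumExpAux (d m r : ℕ) (hmd : m ∣ d) (hm : 0 < m) (hlt : m < d) (hr : r < m) :
    ∑ k ∈ Finset.range d, (if k % m = r then Complex.exp (2*Real.pi*I*k/d) else 0) = 0 := by
  have hd : 0 < d := hm.trans hlt
  set q := d / m with hq
  have hqm : m * q = d := Nat.mul_div_cancel' hmd
  rw [← Finset.sum_filter]
  have step1 : ∑ k ∈ (Finset.range d).filter (fun k => k % m = r),
      Complex.exp (2*Real.pi*I*k/d)
      = ∑ b ∈ Finset.range q, Complex.exp (2*Real.pi*I*(m*b+r)/d) := by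
    refine Finset.sum_nbij' (fun k => k / m) (fun b => m * b + r) ?_ ?_ ?_ ?_ ?_
    · intro k hk
      simp only [Finset.mem_filter, Finset.mem_range] at hk
      simp only [Finset.mem_range, hq]
      exact Nat.div_lt_div_of_lt_of_dvd hmd hk.1
    · intro b hb
      simp only [Finset.mem_range] at hb
      simp only [Finset.mem_filter, Finset.mem_range]
      constructor
      · calc m * b + r < m * (b+1) := by rw [Nat.mul_succ]; omega
          _ ≤ m * q := Nat.mul_le_mul_left m hb
          _ = d := hqm
      · rw [Nat.mul_add_mod]; exact Nat.mod_eq_of_lt hr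
    · intro k hk
      simp only [Finset.mem_filter, Finset.mem_range] at hk
      rw [← hk.2]; exact Nat.div_add_mod k m
    · intro b hb
      show (m * b + r) / m = b
      rw [Nat.mul_add_div hm, Nat.div_eq_of_lt hr]; ring
    · intro k hk
      simp only [Finset.mem_filter, Finset.mem_range] at hk
      congr 2
      have h1 : m * (k / m) + r = k := by rw [← hk.2]; exact Nat.div_add_mod k m
      have h2 := congrArg (fun x : ℕ => (x:ℂ)) h1
      push_cast at h2 ⊢
      rw [h2]
  rw [step1]
  have hz : ∀ b ∈ Finset.range q, Complex.exp (2*Real.pi*I*(m*b+r)/d)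
      = Complex.exp (2*Real.pi*I*r/d) * (Complex.exp (2*Real.pi*I*m/d))^b := by
    intro b _
    rw [← Complex.exp_nat_mul, ← Complex.exp_add]
    congr 1
    field_simp
    ring
  rw [Finset.sum_congr rfl hz, ← Finset.mul_sum]
  have hz1 : Complex.exp (2*Real.pi*I*m/d) ≠ 1 := by
    intro h
    rw [Complex.exp_eq_one_iff] at h
    obtain ⟨k, hk⟩ := h
    have h2 : (2*(Real.pi:ℂ)*I) * ((m:ℂ)/d) = (2*(Real.pi:ℂ)*I) * k := by
      linear_combination hk
    have h3 : ((m:ℂ)/d) = k := mul_left_cancel₀ Complex.two_pi_I_ne_zero h2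
    have h4 : ((m:ℝ)/d) = (k:ℝ) := by
      apply Complex.ofReal_inj.1
      push_cast
      exact h3
    have h5 : (0:ℝ) < (m:ℝ)/d := by positivity
    have h6 : (m:ℝ)/d < 1 := by
      rw [div_lt_one (by exact_mod_cast hd)]
      exact_mod_cast hlt
    rw [h4] at h5 h6
    have : 0 < k := by exact_mod_cast h5
    have : k < 1 := by exact_mod_cast h6
    omega
  rw [geom_sum_eq hz1]
  have hzq : (Complex.exp (2*Real.pi*I*m/d))^q = 1 := by
    rw [← Complex.exp_nat_mul]
    have : (q:ℂ) * (2*Real.pi*I*m/d) = 2*Real.pi*I := by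
      have hd' : (d:ℂ) ≠ 0 := Nat.cast_ne_zero.2 hd.ne'
      have hqm' : (q:ℂ)*(m:ℂ) = (d:ℂ) := by
        rw [mul_comm]; exact_mod_cast congrArg (fun x:ℕ => (x:ℂ)) hqm
      field_simp
      linear_combination hqm'
    rw [this, Complex.exp_two_pi_mul_I]
  rw [hzq]
  simp

open Function in
lemma perm_pow_apply_eq_iff {α : Type*} [Fintype α] [DecidableEq α] (g : Equiv.Perm α) (x : α)
    (a b : ℕ) :
    (g ^ a) x = (g ^ b) x ↔ a % minimalPeriod ⇑g x = b % minimalPeriod ⇑g x := by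
  set m := minimalPeriod ⇑g x with hm
  have hper : IsPeriodicPt ⇑g (orderOf g) x := by
    show (⇑g)^[orderOf g] x = x
    rw [Equiv.Perm.iterate_eq_pow, pow_orderOf_eq_one]; rfl
  have hm0 : 0 < m := hper.minimalPeriod_pos (orderOf_pos g)
  have hmod : ∀ k : ℕ, (g ^ (k % m)) x = (g ^ k) x := by
    intro k
    have := Function.iterate_mod_minimalPeriod_eq (f := ⇑g) (x := x) (n := k)
    exact this
  constructor
  · suffices H : ∀ a b : ℕ, a % m ≤ b % m → (g ^ a) x = (g ^ b) x → a % m = b % m by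
      intro h
      rcases le_total (a % m) (b % m) with h' | h'
      · exact H a b h' h
      · exact (H b a h' h.symm).symm
    intro a b hab h
    have h' : (g ^ (a % m)) x = (g ^ (b % m)) x := by rw [hmod, hmod]; exact h
    have h2 : (g ^ (b % m - a % m)) x = x := by
      apply (g ^ (a % m)).injective
      rw [← Equiv.Perm.mul_apply, ← pow_add, Nat.add_sub_cancel' hab, ← h']
    have hper2 : IsPeriodicPt ⇑g (b % m - a % m) x := by
      show (⇑g)^[b % m - a % m] x = x
      rw [Equiv.Perm.iterate_eq_pow]; exact h2
    rcases Nat.eq_zero_or_pos (b % m - a % m) with h0 | h0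
    · omega
    · have h3 : m ≤ b % m - a % m := hper2.minimalPeriod_le h0
      have h4 : b % m < m := Nat.mod_lt _ hm0
      omega
  · intro h
    rw [← hmod a, ← hmod b, h]

/-- `P(⟨g⟩)` is a simplex (the permutation matrices `M(g^k)`, `k < d = orderOf g`, are
affinely independent) if and only if `g` has a cycle of length `d`. -/
theorem permPolytope_simplex_iff
    (n t : ℕ) (ℓ : Fin t → ℕ) (hℓ : ∀ i, 2 ≤ ℓ i)
    (g : Equiv.Perm (Fin n)) (hg1 : g ≠ 1)
    (hg : g.cycleType = Multiset.map ℓ Finset.univ.val) :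
    AffineIndependent ℝ
        (fun k : Fin (orderOf g) => (g ^ (k : ℕ)).permMatrix ℝ)
      ↔ ∃ i : Fin t, ℓ i = orderOf g := by
  classical
  set d := orderOf g with hd
  have hd0 : 0 < d := orderOf_pos g
  have hd1 : 1 < d := by
    have h1 : d ≠ 1 := fun h1 => hg1 (orderOf_eq_one_iff.1 h1)
    omega
  have hper : ∀ x : Fin n, Function.IsPeriodicPt ⇑g d x := fun x => by
    show (⇑g)^[d] x = x
    rw [Equiv.Perm.iterate_eq_pow, pow_orderOf_eq_one]; rfl
  have hmd : ∀ x, Function.minimalPeriod ⇑g x ∣ d := fun x => (hper x).minimalPeriod_dvd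
  have hm0 : ∀ x, 0 < Function.minimalPeriod ⇑g x := fun x => (hper x).minimalPeriod_pos hd0
  have hentry : ∀ (k : ℕ) (i j : Fin n),
      (g ^ k).permMatrix ℝ i j = if (g ^ k) i = j then 1 else 0 := by
    intro k i j
    simp [Equiv.Perm.permMatrix, PEquiv.toMatrix_apply, Equiv.toPEquiv_apply]
  constructor
  · intro hAI
    by_contra hne
    push_neg at hne
    -- every point has minimal period < d
    have hmlt : ∀ x : Fin n, Function.minimalPeriod ⇑g x < d := by
      intro x
      refine lt_of_le_of_ne (Nat.le_of_dvd hd0 (hmd x)) fun hEq => ?_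
      by_cases hfix : g x = x
      · have h1 : Function.minimalPeriod ⇑g x = 1 :=
          Function.minimalPeriod_eq_one_iff_isFixedPt.2 hfix
        omega
      · have hxs : x ∈ g.support := Equiv.Perm.mem_support.2 hfix
        have hcf : g.cycleOf x ∈ g.cycleFactorsFinset :=
          (Equiv.Perm.cycleOf_mem_cycleFactorsFinset_iff).2 hxs
        have hcard : (g.cycleOf x).support.card ∈ g.cycleType := by
          rw [Equiv.Perm.cycleType_def]
          exact Multiset.mem_map_of_mem _ hcf
        rw [hg, Multiset.mem_map] at hcard
        obtain ⟨i, -, hi⟩ := hcard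
        have hmc : Function.minimalPeriod ⇑g x ∣ (g.cycleOf x).support.card := by
          apply Function.IsPeriodicPt.minimalPeriod_dvd
          show (⇑g)^[(g.cycleOf x).support.card] x = x
          rw [Equiv.Perm.iterate_eq_pow]
          have h2 := Equiv.Perm.pow_mod_card_support_cycleOf_self_apply g
            ((g.cycleOf x).support.card) x
          rw [Nat.mod_self] at h2
          simpa using h2.symm
        have hld : ℓ i ∣ d := by
          have hmem : ℓ i ∈ g.cycleType := by
            rw [hg]; exact Multiset.mem_map_of_mem _ (by simp)
          have := Multiset.dvd_lcm hmem
          rwa [Equiv.Perm.lcm_cycleType] at this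
        rw [hEq, ← hi] at hmc
        exact hne i (Nat.dvd_antisymm hld hmc)
    -- the dependence coefficients
    set w : Fin d → ℝ := fun k => (Complex.exp (2*Real.pi*Complex.I*((k:ℕ):ℂ)/d)).re with hw
    have hsum : ∑ k : Fin d, w k = 0 := by
      have h1 := sumExpAux d 1 0 (one_dvd d) one_pos hd1 one_pos
      simp only [Nat.mod_one, eq_self_iff_true, if_true] at h1
      calc ∑ k : Fin d, w k
          = ∑ k ∈ Finset.range d, (Complex.exp (2*Real.pi*Complex.I*(k:ℂ)/d)).re :=
            Fin.sum_univ_eq_sum_range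
              (fun k : ℕ => (Complex.exp (2*Real.pi*Complex.I*(k:ℂ)/d)).re) d
        _ = (∑ k ∈ Finset.range d, Complex.exp (2*Real.pi*Complex.I*(k:ℂ)/d)).re :=
            (Complex.re_sum _ _).symm
        _ = 0 := by rw [h1]; rfl
    have hcomb : ∑ k : Fin d, w k • (g ^ (k:ℕ)).permMatrix ℝ = 0 := by
      ext i j
      rw [Matrix.sum_apply]
      simp only [Matrix.smul_apply, hentry, smul_eq_mul, Matrix.zero_apply]
      by_cases hex : ∃ r : Fin d, (g ^ (r:ℕ)) i = j
      · obtain ⟨r, hr⟩ := hex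
        set m := Function.minimalPeriod ⇑g i with hmi
        have hcond : ∀ k : Fin d, ((g ^ (k:ℕ)) i = j) ↔ ((k:ℕ) % m = (r:ℕ) % m) := by
          intro k
          rw [← hr]
          exact perm_pow_apply_eq_iff g i _ _
        calc ∑ k : Fin d, w k * (if (g^(k:ℕ)) i = j then 1 else 0)
            = ∑ k : Fin d, (if ((k:ℕ) % m = (r:ℕ) % m) then w k else 0) := by
              refine Finset.sum_congr rfl fun k _ => ?_
              simp only [hcond k, mul_ite, mul_one, mul_zero]
          _ = ∑ k ∈ Finset.range d, (if (k % m = (r:ℕ) % m)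
                then (Complex.exp (2*Real.pi*Complex.I*(k:ℂ)/d)).re else 0) :=
              Fin.sum_univ_eq_sum_range
                (fun k => if (k % m = (r:ℕ) % m)
                  then (Complex.exp (2*Real.pi*Complex.I*(k:ℂ)/d)).re else 0) d
          _ = (∑ k ∈ Finset.range d, (if (k % m = (r:ℕ) % m)
                then Complex.exp (2*Real.pi*Complex.I*(k:ℂ)/d) else 0)).re := by
              rw [Complex.re_sum]
              refine Finset.sum_congr rfl fun k _ => ?_
              split <;> simp
          _ = 0 := by
              rw [sumExpAux d m ((r:ℕ) % m) (hmd i) (hm0 i) (hmlt i)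
                (Nat.mod_lt _ (hm0 i))]
              rfl
      · refine Finset.sum_eq_zero fun k _ => ?_
        rw [if_neg fun h => hex ⟨k, h⟩, mul_zero]
    have h0 : w ⟨0, hd0⟩ = 0 :=
      affineIndependent_iff.1 hAI Finset.univ w hsum hcomb _ (Finset.mem_univ _)
    apply absurd h0
    rw [hw]
    norm_num
  · rintro ⟨i, hi⟩
    have hdc : d ∈ g.cycleType := by
      rw [hg, ← hi]
      exact Multiset.mem_map_of_mem _ (by simp)
    rw [Equiv.Perm.cycleType_def, Multiset.mem_map] at hdc
    obtain ⟨c, hc, hcard⟩ := hdc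
    have hc' : c ∈ g.cycleFactorsFinset := hc
    have hcyc : c.IsCycle := (Equiv.Perm.mem_cycleFactorsFinset_iff.1 hc').1
    simp only [Function.comp_apply] at hcard
    have hsupp : c.support.Nonempty := Finset.card_pos.1 (by rw [hcard]; exact hd0)
    obtain ⟨x, hx⟩ := hsupp
    have hcx : c = g.cycleOf x := Equiv.Perm.cycle_is_cycleOf hx hc'
    set m := Function.minimalPeriod ⇑g x with hmx
    have hcm : c ^ m = 1 := by
      have h1 : (c ^ m) x = x := by
        rw [hcx, Equiv.Perm.cycleOf_pow_apply_self]
        exact Function.iterate_minimalPeriod (f := ⇑g) (x := x)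
      exact (hcyc.pow_eq_one_iff' (Equiv.Perm.mem_support.1 hx)).2 h1
    have hdvd : d ∣ m := by
      have h2 := orderOf_dvd_of_pow_eq_one hcm
      rwa [hcyc.orderOf, hcard] at h2
    have hm_eq : m = d := Nat.dvd_antisymm (hmd x) hdvd
    rw [affineIndependent_iff]
    intro s w hw0 hcomb k hk
    have hval2 : ∑ e ∈ s, (if (g^(e:ℕ)) x = (g^(k:ℕ)) x then w e else 0) = 0 := by
      have h3 : (∑ e ∈ s, w e • (g^(e:ℕ)).permMatrix ℝ) x ((g^(k:ℕ)) x)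
          = ∑ e ∈ s, (if (g^(e:ℕ)) x = (g^(k:ℕ)) x then w e else 0) := by
        rw [Matrix.sum_apply]
        refine Finset.sum_congr rfl fun e _ => ?_
        rw [Matrix.smul_apply, hentry, smul_eq_mul, mul_ite, mul_one, mul_zero]
      rw [← h3, hcomb]
      rfl
    have hcond : ∀ e : Fin d, ((g^(e:ℕ)) x = (g^(k:ℕ)) x) ↔ e = k := by
      intro e
      rw [perm_pow_apply_eq_iff, ← hmx, hm_eq,
        Nat.mod_eq_of_lt e.isLt, Nat.mod_eq_of_lt k.isLt]
      exact ⟨fun h => Fin.ext h, fun h => by rw [h]⟩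
    have h4 : ∑ e ∈ s, (if (g^(e:ℕ)) x = (g^(k:ℕ)) x then w e else 0)
        = ∑ e ∈ s, (if e = k then w e else 0) :=
      Finset.sum_congr rfl fun e _ => by simp only [hcond e]
    rw [h4, Finset.sum_ite_eq' s k w, if_pos hk] at hval2
    exact hval2
end

section
/- Let g ∈ Equiv.Perm (Fin n) have disjoint cycle decomposition into t cycles of lengths ℓ 1, …, ℓ t, let G = ⟨g⟩ and d = orderOf g, and suppose ℓ i = d for some i. Then P(G) is a unimodular simplex up to lattice isomorphism: there exist affine maps φ : Matrix (Fin n) (Fin n) ℝ →ᵃ[ℝ] (Fin d → ℝ) and ψ : (Fin d → ℝ) →ᵃ[ℝ] Matrix (Fin n) (Fin n) ℝ such that φ maps every matrix with all entries in ℤ to a vector with all entries in ℤ, ψ maps every vector with all entries in ℤ to a matrix with all entries in ℤ, and for every k ∈ Fin d one has φ (M(g^k)) = e k (the k-th standard basis vector of Fin d → ℝ) and ψ (e k) = M(g^k). -/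
/-- If `g` has a cycle of length `d = orderOf g`, then `P(⟨g⟩)` is a unimodular simplex up to
lattice isomorphism: there are mutually inverse integral affine maps carrying the vertices
`M(g^k)` to the standard basis vectors of `Fin d → ℝ` and back. -/
theorem permPolytope_unimodular_simplex
    (n t : ℕ) (ℓ : Fin t → ℕ) (hℓ : ∀ i, 2 ≤ ℓ i)
    (g : Equiv.Perm (Fin n))
    (hg : g.cycleType = Multiset.map ℓ Finset.univ.val)
    (hcycle : ∃ i : Fin t, ℓ i = orderOf g) :
    ∃ (φ : Matrix (Fin n) (Fin n) ℝ →ᵃ[ℝ] (Fin (orderOf g) → ℝ))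
      (ψ : (Fin (orderOf g) → ℝ) →ᵃ[ℝ] Matrix (Fin n) (Fin n) ℝ),
      (∀ A : Matrix (Fin n) (Fin n) ℝ,
        (∀ p q : Fin n, ∃ z : ℤ, A p q = (z : ℝ)) →
        ∀ k : Fin (orderOf g), ∃ z : ℤ, φ A k = (z : ℝ)) ∧
      (∀ v : Fin (orderOf g) → ℝ,
        (∀ k : Fin (orderOf g), ∃ z : ℤ, v k = (z : ℝ)) →
        ∀ p q : Fin n, ∃ z : ℤ, ψ v p q = (z : ℝ)) ∧
      (∀ k : Fin (orderOf g),
        φ ((g ^ (k : ℕ)).permMatrix ℝ) = Pi.single k (1 : ℝ)) ∧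
      (∀ k : Fin (orderOf g),
        ψ (Pi.single k (1 : ℝ)) = (g ^ (k : ℕ)).permMatrix ℝ) := by
  classical
  set d := orderOf g with hd
  -- find a point x whose cycle has length d
  obtain ⟨i, hi⟩ := hcycle
  have hdmem : d ∈ g.cycleType := by
    rw [hg]
    exact Multiset.mem_map.2 ⟨i, Finset.mem_univ_val i, hi⟩
  rw [Equiv.Perm.cycleType_def] at hdmem
  obtain ⟨c, hc, hcard⟩ := Multiset.mem_map.1 hdmem
  have hcf : c ∈ g.cycleFactorsFinset := hc
  have hd2 : 2 ≤ d := hi ▸ hℓ i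
  have hcardd : c.support.card = d := hcard
  have hx : ∃ x : Fin n, x ∈ c.support := by
    have : 0 < c.support.card := by omega
    exact (Finset.card_pos.1 this).imp fun x hx => hx
  obtain ⟨x, hxc⟩ := hx
  have hceq : c = g.cycleOf x := Equiv.Perm.cycle_is_cycleOf hxc hcf
  have hgx : g x ≠ x := by
    have := Equiv.Perm.mem_support.1 hxc
    rw [hceq, Equiv.Perm.cycleOf_apply_self] at this
    exact this
  have horder : orderOf (g.cycleOf x) = d := by
    rw [← hceq, (Equiv.Perm.mem_cycleFactorsFinset_iff.1 hcf).1.orderOf, hcardd]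
  have key : ∀ m : ℕ, m < d → (g ^ m) x = x → m = 0 := by
    intro m hm hmx
    have hcyc : (g.cycleOf x).IsCycle := Equiv.Perm.isCycle_cycleOf g hgx
    have h1 : ((g.cycleOf x) ^ m) x = x := by
      rw [Equiv.Perm.cycleOf_pow_apply_self]; exact hmx
    have h2 : (g.cycleOf x) ^ m = 1 := (hcyc.pow_eq_one_iff'
      (by rw [Equiv.Perm.cycleOf_apply_self]; exact hgx)).2 h1
    have hdvd := orderOf_dvd_of_pow_eq_one h2
    rw [horder] at hdvd
    exact Nat.eq_zero_of_dvd_of_lt hdvd hm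
  have inj : ∀ a b : Fin d, (g ^ (a : ℕ)) x = (g ^ (b : ℕ)) x → a = b := by
    intro a b hab
    rcases le_total (a : ℕ) (b : ℕ) with h | h
    · have : (g ^ ((b : ℕ) - (a : ℕ))) x = x := by
        apply (g ^ (a : ℕ)).injective
        rw [← Equiv.Perm.mul_apply, ← pow_add, Nat.add_sub_cancel' h, ← hab]
      have := key _ (by omega : (b : ℕ) - (a : ℕ) < d) this
      exact Fin.ext (by omega)
    · have : (g ^ ((a : ℕ) - (b : ℕ))) x = x := by
        apply (g ^ (b : ℕ)).injective
        rw [← Equiv.Perm.mul_apply, ← pow_add, Nat.add_sub_cancel' h, hab]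
      have := key _ (by omega : (a : ℕ) - (b : ℕ) < d) this
      exact Fin.ext (by omega)
  -- define φ and ψ as linear maps
  let φL : Matrix (Fin n) (Fin n) ℝ →ₗ[ℝ] (Fin d → ℝ) :=
    { toFun := fun A k => A x ((g ^ (k : ℕ)) x)
      map_add' := by intro A B; rfl
      map_smul' := by intro r A; rfl }
  let ψL : (Fin d → ℝ) →ₗ[ℝ] Matrix (Fin n) (Fin n) ℝ :=
    { toFun := fun v => ∑ k : Fin d, v k • (g ^ (k : ℕ)).permMatrix ℝ
      map_add' := by
        intro u v
        simp [add_smul, Finset.sum_add_distrib]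
      map_smul' := by
        intro r v
        simp [Finset.smul_sum, smul_smul] }
  refine ⟨φL.toAffineMap, ψL.toAffineMap, ?_, ?_, ?_, ?_⟩
  · intro A hA k
    exact hA x ((g ^ (k : ℕ)) x)
  · intro v hv p q
    choose z hz using hv
    refine ⟨∑ k : Fin d, z k * (if (g ^ (k : ℕ)) p = q then 1 else 0), ?_⟩
    have : ψL v p q = ∑ k : Fin d, v k * ((g ^ (k : ℕ)).permMatrix ℝ p q) := by
      simp [ψL, Matrix.sum_apply]
    rw [LinearMap.coe_toAffineMap, this]
    push_cast
    refine Finset.sum_congr rfl fun k _ => ?_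
    rw [hz k, Equiv.Perm.permMatrix, PEquiv.toMatrix_apply, Equiv.toPEquiv_apply]
    by_cases h : (g ^ (k : ℕ)) p = q <;>
      simp only [← Equiv.Perm.coe_pow, Option.mem_def, Option.some.injEq, h, if_true, if_false, ite_true, ite_false]
  · intro k
    funext m
    simp only [LinearMap.coe_toAffineMap, φL, LinearMap.coe_mk, AddHom.coe_mk]
    show (g ^ (k : ℕ)).permMatrix ℝ x ((g ^ (m : ℕ)) x) = _
    rw [Equiv.Perm.permMatrix, PEquiv.toMatrix_apply, Equiv.toPEquiv_apply]
    by_cases h : m = k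
    · subst h; simp
    · have : (g ^ (k : ℕ)) x ≠ (g ^ (m : ℕ)) x := fun he => h (inj m k he.symm)
      simp only [Option.mem_def, Option.some.injEq]
      rw [if_neg this, Pi.single_eq_of_ne h]
  · intro k
    simp only [LinearMap.coe_toAffineMap, ψL, LinearMap.coe_mk, AddHom.coe_mk]
    rw [Finset.sum_eq_single k]
    · simp
    · intro b _ hb
      rw [Pi.single_eq_of_ne hb, zero_smul]
    · intro h; exact absurd (Finset.mem_univ k) h
end

section
/- Let g ∈ Equiv.Perm (Fin n) with g ≠ 1, let G = ⟨g⟩ and d = orderOf g. If d is a prime power (d = p^e for some prime p and e ≥ 1), then P(G) is a simplex, i.e. the family of points (M(g^k))_{k ∈ Fin d} is affinely independent over ℝ. -/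
/-- If the order of `g ≠ 1` is a prime power, then `P(⟨g⟩)` is a simplex, i.e. the
permutation matrices `M(g^k)`, `k < orderOf g`, are affinely independent over `ℝ`. -/
theorem permPolytope_simplex_of_primePow
    (n : ℕ) (g : Equiv.Perm (Fin n)) (hg1 : g ≠ 1)
    (hpp : ∃ (p e : ℕ), p.Prime ∧ 1 ≤ e ∧ orderOf g = p ^ e) :
    AffineIndependent ℝ
      (fun k : Fin (orderOf g) => (g ^ (k : ℕ)).permMatrix ℝ) := by
  obtain ⟨p, e, hp, he, hd⟩ := hpp
  set d := orderOf g with hdd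
  -- `g ^ (p ^ (e-1)) ≠ 1`
  have hne : g ^ (p ^ (e - 1)) ≠ 1 := by
    intro h
    have h1 : d ∣ p ^ (e - 1) := orderOf_dvd_of_pow_eq_one h
    rw [hd] at h1
    have := (Nat.pow_dvd_pow_iff_le_right hp.one_lt).mp h1
    omega
  obtain ⟨x, hx⟩ : ∃ x, (g ^ (p ^ (e - 1))) x ≠ x := by
    by_contra h
    push_neg at h
    exact hne (Equiv.ext h)
  -- the minimal period of `x` under `g` is `d`
  have hdvd : Function.minimalPeriod ⇑g x ∣ d := by
    apply Function.IsPeriodicPt.minimalPeriod_dvd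
    show (⇑g)^[d] x = x
    rw [Equiv.Perm.iterate_eq_pow, pow_orderOf_eq_one]
    rfl
  have hmin : Function.minimalPeriod ⇑g x = d := by
    rw [hd] at hdvd ⊢
    obtain ⟨i, hi, hieq⟩ := (Nat.dvd_prime_pow hp).mp hdvd
    rcases eq_or_lt_of_le hi with h | h
    · rw [hieq, h]
    · exfalso
      apply hx
      show (⇑g)^[p ^ (e - 1)] x = x
      apply Function.IsPeriodicPt.isFixedPt
      rw [Function.isPeriodicPt_iff_minimalPeriod_dvd, hieq]
      exact pow_dvd_pow p (by omega)
  -- injectivity of `k ↦ g ^ k x` on `Fin d`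
  have key : ∀ a b : ℕ, b ≤ a → (g ^ a) x = (g ^ b) x → d ∣ a - b := by
    intro a b hle hab
    have h1 : (g ^ (a - b)) x = x := by
      apply (g ^ b).injective
      rw [← Equiv.Perm.mul_apply, ← pow_add, show b + (a - b) = a from by omega, hab]
    have h2 := Function.IsPeriodicPt.minimalPeriod_dvd
      (show Function.IsPeriodicPt (⇑g) (a - b) x from by
        show (⇑g)^[a - b] x = x
        rw [Equiv.Perm.iterate_eq_pow]; exact h1)
    rwa [hmin] at h2
  have hinj : Function.Injective (fun k : Fin d => (g ^ (k : ℕ)) x) := by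
    intro a b hab
    simp only at hab
    rcases le_total (b : ℕ) (a : ℕ) with h | h
    · have := Nat.eq_zero_of_dvd_of_lt (key a b h hab) (by omega)
      · exact Fin.ext (by omega)
    · have := Nat.eq_zero_of_dvd_of_lt (key b a h hab.symm) (by omega)
      · exact Fin.ext (by omega)
  -- affine independence via evaluation of the matrices at row `x`
  rw [affineIndependent_iff]
  intro s w hw0 hsum i hi
  have h2 := congrFun (congrFun hsum x) ((g ^ (i : ℕ)) x)
  rw [Matrix.sum_apply] at h2
  simp only [Matrix.smul_apply, PEquiv.toMatrix_apply, Equiv.toPEquiv_apply,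
    Option.mem_def, Option.some_inj, smul_eq_mul, Matrix.zero_apply] at h2
  rw [Finset.sum_eq_single i] at h2
  · simpa using h2
  · intro b _ hbi
    have : (g ^ (b : ℕ)) x ≠ (g ^ (i : ℕ)) x := fun h => hbi (hinj h)
    simp [this]
  · intro h; exact absurd hi h
end

section
/- Let g ∈ Equiv.Perm (Fin n) have disjoint cycle decomposition into t cycles of lengths ℓ 1, …, ℓ t which are pairwise coprime, and let G = ⟨g⟩ (so d = orderOf g = ℓ 1 ⋯ ℓ t). Then P(G) is, up to lattice-preserving affine equivalence, a product of unimodular simplices of dimensions ℓ 1 − 1, …, ℓ t − 1: there exist affine maps φ : Matrix (Fin n) (Fin n) ℝ →ᵃ[ℝ] (Π i : Fin t, Fin (ℓ i) → ℝ) and ψ : (Π i : Fin t, Fin (ℓ i) → ℝ) →ᵃ[ℝ] Matrix (Fin n) (Fin n) ℝ, both mapping points with all coordinates in ℤ to points with all coordinates in ℤ, such that for every k ∈ Fin d, φ (M(g^k)) is the point whose i-th component is the standard basis vector of Fin (ℓ i) → ℝ indexed by k mod ℓ i, and ψ maps that point back to M(g^k). In particular φ restricts to a bijection from P(G) onto the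 product of standard simplices {f | ∀ i, f i ∈ stdSimplex ℝ (Fin (ℓ i))}. -/
open Equiv Equiv.Perm

/-- Linear part of `φ`: read off the entries along each chosen cycle representative. -/
noncomputable def phiMap (n t : ℕ) (ℓ : Fin t → ℕ) (g : Equiv.Perm (Fin n)) (a : Fin t → Fin n) :
    Matrix (Fin n) (Fin n) ℝ →ₗ[ℝ] (Π i : Fin t, Fin (ℓ i) → ℝ) where
  toFun A := fun i j => A (a i) ((g ^ (j : ℕ)) (a i))
  map_add' A B := by funext i j; simp [Matrix.add_apply]
  map_smul' c A := by funext i j; simp [Matrix.smul_apply]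

/-- Linear part of `ψ`. -/
noncomputable def psiMap (n t : ℕ) (ℓ : Fin t → ℕ) (hℓ0 : ∀ i, 0 < ℓ i)
    (g : Equiv.Perm (Fin n))
    (idx : ∀ p : Fin n, p ∈ g.support → Fin t)
    (pos : ∀ p : Fin n, p ∈ g.support → ℕ) :
    (Π i : Fin t, Fin (ℓ i) → ℝ) →ₗ[ℝ] Matrix (Fin n) (Fin n) ℝ where
  toFun v := fun p q =>
    if hp : p ∈ g.support then
      if hq : q ∈ g.support ∧ g.SameCycle p q then
        v (idx p hp) ⟨(pos q hq.1 % ℓ (idx p hp) + ℓ (idx p hp) - pos p hp % ℓ (idx p hp))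
            % ℓ (idx p hp), Nat.mod_lt _ (hℓ0 _)⟩
      else 0
    else 0
  map_add' v w := by
    funext p q
    simp only [Matrix.add_apply, Pi.add_apply]
    erw [Matrix.add_apply]
    by_cases hp : p ∈ g.support
    · by_cases hq : q ∈ g.support ∧ g.SameCycle p q
      · simp only [dif_pos hp, dif_pos hq, Pi.add_apply]
      · simp only [dif_pos hp, dif_neg hq, add_zero]
    · simp only [dif_neg hp, add_zero]
  map_smul' c v := by
    funext p q
    simp only [Matrix.smul_apply, Pi.smul_apply, RingHom.id_apply]
    erw [Matrix.smul_apply]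
    by_cases hp : p ∈ g.support
    · by_cases hq : q ∈ g.support ∧ g.SameCycle p q
      · simp only [dif_pos hp, dif_pos hq, Pi.smul_apply, RingHom.id_apply, smul_eq_mul]
      · simp only [dif_pos hp, dif_neg hq, smul_zero, RingHom.id_apply]
    · simp only [dif_neg hp, smul_zero, RingHom.id_apply]

lemma aux_mod (L k x y : ℕ) (hL : 0 < L) :
    (y % L + L - x % L) % L = k % L ↔ (k + x) % L = y % L := by
  have hx : x % L < L := Nat.mod_lt _ hL
  have h1 : (y % L + L - x % L) + x ≡ y [MOD L] := by
    calc (y % L + L - x % L) + x ≡ (y % L + L - x % L) + x % L [MOD L] :=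
          Nat.ModEq.add_left _ (Nat.mod_modEq x L).symm
      _ = y % L + L := by omega
      _ ≡ y [MOD L] := by
          calc y % L + L ≡ y % L + 0 [MOD L] := Nat.ModEq.add_left _ (Nat.modEq_zero_iff_dvd.mpr dvd_rfl)
            _ = y % L := by omega
            _ ≡ y [MOD L] := Nat.mod_modEq y L
  constructor
  · intro h
    exact ((Nat.ModEq.add_right x h).symm.trans h1 : _)
  · intro h
    have h2 : (y % L + L - x % L) + x ≡ k + x [MOD L] := h1.trans h.symm
    exact h2.add_right_cancel' x

lemma permMatrix_apply {n : ℕ} (σ : Equiv.Perm (Fin n)) (p q : Fin n) :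
    (σ.permMatrix ℝ) p q = if σ p = q then 1 else 0 := by
  simp [Equiv.Perm.permMatrix, PEquiv.toMatrix_apply, Equiv.toPEquiv_apply, Option.mem_def,
    eq_comm]

/-- If the cycle lengths `ℓ 1, …, ℓ t` of `g` are pairwise coprime, then `P(⟨g⟩)` is,
up to lattice-preserving affine equivalence, a product of unimodular simplices of
dimensions `ℓ 1 - 1, …, ℓ t - 1`. -/
theorem permPolytope_product_of_simplices
    (n t : ℕ) (ℓ : Fin t → ℕ) (hℓ : ∀ i, 2 ≤ ℓ i)
    (hcop : ∀ i j : Fin t, i ≠ j → Nat.Coprime (ℓ i) (ℓ j))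
    (g : Equiv.Perm (Fin n))
    (hg : g.cycleType = Multiset.map ℓ Finset.univ.val) :
    ∃ (φ : Matrix (Fin n) (Fin n) ℝ →ᵃ[ℝ] (Π i : Fin t, Fin (ℓ i) → ℝ))
      (ψ : (Π i : Fin t, Fin (ℓ i) → ℝ) →ᵃ[ℝ] Matrix (Fin n) (Fin n) ℝ),
      (∀ A : Matrix (Fin n) (Fin n) ℝ,
        (∀ p q : Fin n, ∃ z : ℤ, A p q = (z : ℝ)) →
        ∀ (i : Fin t) (j : Fin (ℓ i)), ∃ z : ℤ, φ A i j = (z : ℝ)) ∧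
      (∀ v : Π i : Fin t, Fin (ℓ i) → ℝ,
        (∀ (i : Fin t) (j : Fin (ℓ i)), ∃ z : ℤ, v i j = (z : ℝ)) →
        ∀ p q : Fin n, ∃ z : ℤ, ψ v p q = (z : ℝ)) ∧
      (∀ k : Fin (orderOf g),
        φ ((g ^ (k : ℕ)).permMatrix ℝ)
          = fun i : Fin t =>
              Pi.single (⟨(k : ℕ) % ℓ i,
                Nat.mod_lt _ (lt_of_lt_of_le Nat.zero_lt_two (hℓ i))⟩ : Fin (ℓ i))
                (1 : ℝ)) ∧
      (∀ k : Fin (orderOf g),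
        ψ (fun i : Fin t =>
              Pi.single (⟨(k : ℕ) % ℓ i,
                Nat.mod_lt _ (lt_of_lt_of_le Nat.zero_lt_two (hℓ i))⟩ : Fin (ℓ i))
                (1 : ℝ))
          = (g ^ (k : ℕ)).permMatrix ℝ) ∧
      Set.BijOn φ (permPolytope n (Subgroup.zpowers g))
        {f : Π i : Fin t, Fin (ℓ i) → ℝ | ∀ i, f i ∈ stdSimplex ℝ (Fin (ℓ i))} := by
  classical
  have hℓ0 : ∀ i, 0 < ℓ i := fun i => lt_of_lt_of_le Nat.zero_lt_two (hℓ i)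
  have hinj : Function.Injective ℓ := by
    intro i j hij
    by_contra hne
    have h := hcop i j hne
    rw [hij, Nat.Coprime, Nat.gcd_self] at h
    have := hℓ j; omega
  have hnodup : g.cycleType.Nodup := by
    rw [hg]; exact Finset.univ.nodup.map hinj
  have hcardinj : ∀ c ∈ g.cycleFactorsFinset, ∀ c' ∈ g.cycleFactorsFinset,
      c.support.card = c'.support.card → c = c' := by
    rw [Equiv.Perm.cycleType_def] at hnodup
    exact fun c hc c' hc' h => Multiset.inj_on_of_nodup_map hnodup c hc c' hc' h
  -- choose a cycle `c i` of length `ℓ i` and a point `a i` on it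
  have hex : ∀ i : Fin t, ∃ c, c ∈ g.cycleFactorsFinset ∧ c.support.card = ℓ i := by
    intro i
    have h1 : ℓ i ∈ g.cycleType := by
      rw [hg]; exact Multiset.mem_map_of_mem ℓ (Finset.mem_univ_val i)
    rw [Equiv.Perm.cycleType_def] at h1
    obtain ⟨c, hc, hc'⟩ := Multiset.mem_map.mp h1
    exact ⟨c, hc, hc'⟩
  choose c hc1 hc2 using hex
  have hane : ∀ i, (c i).support.Nonempty :=
    fun i => Finset.card_pos.mp (by rw [hc2 i]; exact hℓ0 i)
  choose a ha using hane
  have hca : ∀ i, g.cycleOf (a i) = c i :=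
    fun i => (Equiv.Perm.cycle_is_cycleOf (ha i) (hc1 i)).symm
  have hacard : ∀ i, (g.cycleOf (a i)).support.card = ℓ i := by
    intro i; rw [hca i]; exact hc2 i
  have hasup : ∀ i, a i ∈ g.support := by
    intro i
    have := Equiv.Perm.support_cycleOf_le g (a i)
    exact this (by rw [hca i]; exact ha i)
  -- the phase lemma
  have hphase : ∀ (i : Fin t) (m k : ℕ),
      ((g ^ m) (a i) = (g ^ k) (a i)) ↔ m ≡ k [MOD ℓ i] := by
    intro i m k
    have hmem : a i ∈ (g.cycleOf (a i)).support :=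
      Equiv.Perm.mem_support_cycleOf_iff.mpr ⟨Equiv.Perm.SameCycle.refl g (a i), hasup i⟩
    have h1 := (g.isCycleOn_support_cycleOf (a i)).pow_apply_eq_pow_apply hmem (m := m) (n := k)
    rwa [hacard i] at h1
  -- index of the cycle through a point of the support
  have hidxex : ∀ p : Fin n, p ∈ g.support → ∃ i : Fin t, (g.cycleOf p).support.card = ℓ i := by
    intro p hp
    have h1 : (g.cycleOf p).support.card ∈ g.cycleType := by
      rw [Equiv.Perm.cycleType_def]
      exact Multiset.mem_map_of_mem _ (Equiv.Perm.cycleOf_mem_cycleFactorsFinset_iff.mpr hp)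
    rw [hg] at h1
    obtain ⟨i, _, h⟩ := Multiset.mem_map.mp h1
    exact ⟨i, h.symm⟩
  choose idx hidx using hidxex
  have hcyc : ∀ p (hp : p ∈ g.support), g.cycleOf p = c (idx p hp) := by
    intro p hp
    refine hcardinj _ (Equiv.Perm.cycleOf_mem_cycleFactorsFinset_iff.mpr hp) _ (hc1 _) ?_
    rw [hidx p hp, hc2]
  have hsc : ∀ p (hp : p ∈ g.support), g.SameCycle (a (idx p hp)) p := by
    intro p hp
    have hmem : p ∈ (g.cycleOf (a (idx p hp))).support := by
      rw [hca, ← hcyc p hp]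
      exact Equiv.Perm.mem_support_cycleOf_iff.mpr ⟨Equiv.Perm.SameCycle.refl g p, hp⟩
    exact (Equiv.Perm.mem_support_cycleOf_iff.mp hmem).1
  have hposex : ∀ p (hp : p ∈ g.support), ∃ r : ℕ, (g ^ r) (a (idx p hp)) = p := by
    intro p hp
    obtain ⟨r, -, -, hr⟩ := (hsc p hp).exists_pow_eq g
    exact ⟨r, hr⟩
  choose pos hpos using hposex
  have hidxeq : ∀ p (hp : p ∈ g.support) q (hq : q ∈ g.support),
      g.SameCycle p q → idx p hp = idx q hq := by
    intro p hp q hq hpq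
    apply hinj
    rw [← hidx p hp, ← hidx q hq, hpq.cycleOf_eq]
  -- the two affine maps
  set φ : Matrix (Fin n) (Fin n) ℝ →ᵃ[ℝ] (Π i : Fin t, Fin (ℓ i) → ℝ) :=
    (phiMap n t ℓ g a).toAffineMap with hφdef
  set cMat : Matrix (Fin n) (Fin n) ℝ :=
    fun p q => if p ∈ g.support then 0 else (if p = q then 1 else 0) with hcMatdef
  set ψ : (Π i : Fin t, Fin (ℓ i) → ℝ) →ᵃ[ℝ] Matrix (Fin n) (Fin n) ℝ :=
    (psiMap n t ℓ hℓ0 g idx pos).toAffineMap + AffineMap.const ℝ _ cMat with hψdef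
  have hφapp : ∀ A i j, φ A i j = A (a i) ((g ^ (j : ℕ)) (a i)) := fun A i j => rfl
  have hψapp : ∀ v p q, ψ v p q =
      (if hp : p ∈ g.support then
        if hq : q ∈ g.support ∧ g.SameCycle p q then
          v (idx p hp) ⟨(pos q hq.1 % ℓ (idx p hp) + ℓ (idx p hp) - pos p hp % ℓ (idx p hp))
              % ℓ (idx p hp), Nat.mod_lt _ (hℓ0 _)⟩
        else 0
      else 0) + cMat p q := by
    intro v p q
    rfl
  -- vertex computations
  have hφver : ∀ k : ℕ, φ ((g ^ k).permMatrix ℝ)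
      = fun i : Fin t => Pi.single (⟨k % ℓ i, Nat.mod_lt _ (hℓ0 i)⟩ : Fin (ℓ i)) (1 : ℝ) := by
    intro k
    funext i j
    rw [hφapp, permMatrix_apply, Pi.single_apply]
    have h1 : ((g ^ k) (a i) = (g ^ (j : ℕ)) (a i)) ↔ (j = (⟨k % ℓ i, Nat.mod_lt _ (hℓ0 i)⟩ : Fin (ℓ i))) := by
      rw [hphase i k (j : ℕ)]
      unfold Nat.ModEq
      rw [Nat.mod_eq_of_lt j.isLt, Fin.ext_iff]
      exact eq_comm
    simp only [h1]
  have hψver : ∀ k : ℕ, ψ (fun i : Fin t =>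
        Pi.single (⟨k % ℓ i, Nat.mod_lt _ (hℓ0 i)⟩ : Fin (ℓ i)) (1 : ℝ))
      = (g ^ k).permMatrix ℝ := by
    intro k
    funext p q
    rw [hψapp, permMatrix_apply]
    by_cases hp : p ∈ g.support
    · have hcM : cMat p q = 0 := by rw [hcMatdef]; simp [hp]
      rw [hcM, add_zero, dif_pos hp]
      by_cases hq : q ∈ g.support ∧ g.SameCycle p q
      · rw [dif_pos hq, Pi.single_apply]
        set i := idx p hp with hi
        have hiq : idx q hq.1 = i := (hidxeq p hp q hq.1 hq.2).symm
        -- rewrite p and q in terms of a i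
        have hpeq : (g ^ pos p hp) (a i) = p := hpos p hp
        have hqeq : (g ^ pos q hq.1) (a i) = q := by
          have := hpos q hq.1; rwa [hiq] at this
        have hgkp : (g ^ k) p = (g ^ (k + pos p hp)) (a i) := by
          rw [pow_add, Equiv.Perm.mul_apply, hpeq]
        have hcond : ((g ^ k) p = q) ↔ (k + pos p hp) % ℓ i = pos q hq.1 % ℓ i := by
          conv_lhs => rw [hgkp, ← hqeq]
          exact hphase i _ _
        have hcond2 : ((⟨(pos q hq.1 % ℓ i + ℓ i - pos p hp % ℓ i) % ℓ i,
            Nat.mod_lt _ (hℓ0 _)⟩ : Fin (ℓ i)) = (⟨k % ℓ i, Nat.mod_lt _ (hℓ0 i)⟩ : Fin (ℓ i)))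
            ↔ ((g ^ k) p = q) := by
          rw [hcond, Fin.mk.injEq]
          exact aux_mod (ℓ i) k (pos p hp) (pos q hq.1) (hℓ0 i)
        simp only [hcond2]
      · rw [dif_neg hq]
        have hne : (g ^ k) p ≠ q := by
          intro he
          apply hq
          constructor
          · rw [← he]; exact Equiv.Perm.pow_apply_mem_support.mpr hp
          · rw [← he]; exact Equiv.Perm.sameCycle_pow_right.mpr (Equiv.Perm.SameCycle.refl g p)
        rw [if_neg hne]
    · have hfix : (g ^ k) p = p :=
        Equiv.Perm.pow_apply_eq_self_of_apply_eq_self (Equiv.Perm.notMem_support.mp hp) k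
      rw [dif_neg hp, zero_add, hcMatdef]
      simp only [hp, if_false, hfix]
  refine ⟨φ, ψ, ?_, ?_, ?_, ?_, ?_⟩
  · -- φ preserves integrality
    intro A hA i j
    rw [hφapp]
    exact hA _ _
  · -- ψ preserves integrality
    intro v hv p q
    rw [hψapp]
    have h1 : ∃ z1 : ℤ, (if hp : p ∈ g.support then
        if hq : q ∈ g.support ∧ g.SameCycle p q then
          v (idx p hp) ⟨(pos q hq.1 % ℓ (idx p hp) + ℓ (idx p hp) - pos p hp % ℓ (idx p hp))
              % ℓ (idx p hp), Nat.mod_lt _ (hℓ0 _)⟩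
        else 0
      else 0) = (z1 : ℝ) := by
      by_cases hp : p ∈ g.support
      · by_cases hq : q ∈ g.support ∧ g.SameCycle p q
        · rw [dif_pos hp, dif_pos hq]; exact hv _ _
        · rw [dif_pos hp, dif_neg hq]; exact ⟨0, by simp⟩
      · rw [dif_neg hp]; exact ⟨0, by simp⟩
    have h2 : ∃ z2 : ℤ, cMat p q = (z2 : ℝ) := by
      have hcm : cMat p q = if p ∈ g.support then 0 else (if p = q then 1 else 0) := rfl
      rw [hcm]
      by_cases hp : p ∈ g.support
      · exact ⟨0, by rw [if_pos hp]; simp⟩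
      · by_cases hpq : p = q
        · exact ⟨1, by rw [if_neg hp, if_pos hpq]; simp⟩
        · exact ⟨0, by rw [if_neg hp, if_neg hpq]; simp⟩
    obtain ⟨z1, hz1⟩ := h1
    obtain ⟨z2, hz2⟩ := h2
    exact ⟨z1 + z2, by rw [hz1, hz2]; push_cast; ring⟩
  · -- vertex formula for φ
    intro k
    exact hφver (k : ℕ)
  · -- vertex formula for ψ
    intro k
    exact hψver (k : ℕ)
  · -- BijOn
    -- description of the vertex set
    have hS : {M : Matrix (Fin n) (Fin n) ℝ | ∃ σ ∈ Subgroup.zpowers g, M = σ.permMatrix ℝ}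
        = Set.range (fun k : ℕ => (g ^ k).permMatrix ℝ) := by
      ext M
      constructor
      · rintro ⟨σ, hσ, rfl⟩
        obtain ⟨z, rfl⟩ := Subgroup.mem_zpowers_iff.mp hσ
        refine ⟨(z % (orderOf g : ℤ)).toNat, ?_⟩
        have hd : (0 : ℤ) < (orderOf g : ℤ) := by exact_mod_cast orderOf_pos g
        have : g ^ ((z % (orderOf g : ℤ)).toNat : ℕ) = g ^ z := by
          rw [← zpow_natCast, Int.toNat_of_nonneg (Int.emod_nonneg z hd.ne'), zpow_mod_orderOf]
        exact congrArg (fun h => Equiv.Perm.permMatrix ℝ h) this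
      · rintro ⟨k, rfl⟩
        exact ⟨g ^ k, Subgroup.pow_mem _ (Subgroup.mem_zpowers g) k, rfl⟩
    -- image of the vertex set under φ
    have hV : φ '' {M : Matrix (Fin n) (Fin n) ℝ | ∃ σ ∈ Subgroup.zpowers g, M = σ.permMatrix ℝ}
        = Set.univ.pi (fun i : Fin t => Set.range fun j : Fin (ℓ i) => Pi.single j (1 : ℝ)) := by
      rw [hS]
      ext f
      constructor
      · rintro ⟨-, ⟨k, rfl⟩, rfl⟩
        rw [hφver k]
        intro i _
        exact ⟨⟨k % ℓ i, Nat.mod_lt _ (hℓ0 i)⟩, rfl⟩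
      · intro hf
        have : ∀ i : Fin t, ∃ m : Fin (ℓ i), f i = Pi.single m (1 : ℝ) := by
          intro i
          obtain ⟨m, hm⟩ := hf i (Set.mem_univ i)
          exact ⟨m, hm.symm⟩
        choose m hm using this
        obtain ⟨k, hk⟩ := Nat.chineseRemainderOfFinset (fun i => (m i : ℕ)) ℓ Finset.univ
          (fun i _ => (hℓ0 i).ne') (fun i _ j _ hij => hcop i j hij)
        refine ⟨(g ^ k).permMatrix ℝ, ⟨k, rfl⟩, ?_⟩
        rw [hφver k]
        funext i
        have hki : k % ℓ i = (m i : ℕ) := by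
          have := hk i (Finset.mem_univ i)
          rwa [Nat.ModEq, Nat.mod_eq_of_lt (m i).isLt] at this
        have h3 : (⟨k % ℓ i, Nat.mod_lt _ (hℓ0 i)⟩ : Fin (ℓ i)) = m i := Fin.ext hki
        rw [hm i, h3]
    -- the polytope maps onto the product of simplices
    have hT : {f : Π i : Fin t, Fin (ℓ i) → ℝ | ∀ i, f i ∈ stdSimplex ℝ (Fin (ℓ i))}
        = Set.univ.pi (fun i : Fin t => stdSimplex ℝ (Fin (ℓ i))) := by
      ext f; simp [Set.mem_pi]
    have hsimplex : ∀ i : Fin t,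
        convexHull ℝ (Set.range fun j : Fin (ℓ i) => Pi.single j (1 : ℝ))
          = stdSimplex ℝ (Fin (ℓ i)) := by
      intro i
      refine Eq.trans (congrArg (convexHull ℝ) ?_)
        (convexHull_basis_eq_stdSimplex (R := ℝ) (Fin (ℓ i)))
      refine congrArg Set.range ?_
      funext j j'
      rw [Pi.single_apply]
      by_cases h : j = j'
      · simp [h]
      · simp [h, Ne.symm h]
    have himage : φ '' permPolytope n (Subgroup.zpowers g)
        = {f : Π i : Fin t, Fin (ℓ i) → ℝ | ∀ i, f i ∈ stdSimplex ℝ (Fin (ℓ i))} := by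
      rw [permPolytope, AffineMap.image_convexHull, hV, convexHull_pi, hT]
      simp only [hsimplex]
    -- ψ ∘ φ is the identity on the polytope
    have hfix : ∀ A ∈ permPolytope n (Subgroup.zpowers g), ψ (φ A) = A := by
      have hE : Convex ℝ {A : Matrix (Fin n) (Fin n) ℝ | ψ (φ A) = A} := by
        intro x hx y hy α β hα hβ hαβ
        have h1 := Convex.combo_affine_apply (f := ψ.comp φ) hαβ (x := x) (y := y)
        simp only [AffineMap.comp_apply] at h1
        show ψ (φ _) = _
        rw [h1, hx, hy]
      have hsub : {M : Matrix (Fin n) (Fin n) ℝ | ∃ σ ∈ Subgroup.zpowers g, M = σ.permMatrix ℝ}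
          ⊆ {A : Matrix (Fin n) (Fin n) ℝ | ψ (φ A) = A} := by
        rw [hS]
        rintro - ⟨k, rfl⟩
        show ψ (φ _) = _
        rw [hφver k, hψver k]
      exact fun A hA => convexHull_min hsub hE hA
    refine ⟨?_, ?_, ?_⟩
    · intro A hA
      rw [← himage]
      exact Set.mem_image_of_mem φ hA
    · intro A hA B hB h
      rw [← hfix A hA, ← hfix B hB, h]
    · rw [Set.SurjOn, ← himage]
end

section
/- Let g ∈ Equiv.Perm (Fin n) have disjoint cycle decomposition into t cycles of lengths ℓ 1, …, ℓ t, let G = ⟨g⟩ and d = orderOf g, and let k ∈ ℕ with k < d. Then g^k is decomposable in G if and only if there exists a subset I with ∅ ≠ I ⊊ {1, …, t} such that (1) gcd(d_I, d_{I^c}) divides k, and (2) neither d_I divides k nor d_{I^c} divides k. -/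
/-- `h` is a subelement of `z` if `z = h * k` for some permutation `k` disjoint from `h`. -/
def IsSubelement {n : ℕ} (h z : Equiv.Perm (Fin n)) : Prop :=
  ∃ k : Equiv.Perm (Fin n), h.Disjoint k ∧ z = h * k

/-- `z` is decomposable in `G` if some subelement `h ∈ G` of `z` satisfies `h ≠ 1` and
`h ≠ z`. -/
def DecomposableIn {n : ℕ} (G : Subgroup (Equiv.Perm (Fin n)))
    (z : Equiv.Perm (Fin n)) : Prop :=
  ∃ h ∈ G, IsSubelement h z ∧ h ≠ 1 ∧ h ≠ z

private lemma exists_bij_aux {α β : Type*} [DecidableEq α] [DecidableEq β] [Nonempty α]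
    (f : α → ℕ) (ℓ : β → ℕ) (u : Finset β) :
    ∀ s : Finset α, s.val.map f = u.val.map ℓ →
    ∃ e : β → α, (∀ i ∈ u, e i ∈ s) ∧ (∀ i ∈ u, ∀ j ∈ u, e i = e j → i = j) ∧
      (∀ c ∈ s, ∃ i ∈ u, e i = c) ∧ (∀ i ∈ u, f (e i) = ℓ i) := by
  induction u using Finset.induction_on with
  | empty =>
      intro s hs
      simp only [Finset.empty_val, Multiset.map_zero, Multiset.map_eq_zero] at hs
      refine ⟨fun _ => Classical.arbitrary α, by simp, by simp, ?_, by simp⟩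
      intro c hc
      have : s = ∅ := Finset.val_eq_zero.mp hs
      subst this
      simp at hc
  | @insert i u' hiu IH =>
      intro s hs
      rw [Finset.insert_val_of_notMem hiu, Multiset.map_cons] at hs
      have hmem : ℓ i ∈ s.val.map f := by rw [hs]; exact Multiset.mem_cons_self _ _
      obtain ⟨c, hc, hfc⟩ := Multiset.mem_map.mp hmem
      have hserase : s.val = c ::ₘ (s.erase c).val := by
        rw [Finset.erase_val, ← Multiset.cons_erase hc]; simp
      have hs' : (s.erase c).val.map f = u'.val.map ℓ := by
        have : c ::ₘ (s.erase c).val = s.val := hserase.symm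
        rw [← this, Multiset.map_cons, hfc] at hs
        exact (Multiset.cons_inj_right _).mp hs
      obtain ⟨e', he's, he'inj, he'surj, he'f⟩ := IH _ hs'
      refine ⟨Function.update e' i c, ?_, ?_, ?_, ?_⟩
      · intro j hj
        rcases Finset.mem_insert.mp hj with rfl | hj'
        · simpa using hc
        · have : j ≠ i := fun h => hiu (h ▸ hj')
          rw [Function.update_of_ne this]
          exact Finset.mem_of_mem_erase (he's j hj')
      · intro j hj j' hj'
        rcases Finset.mem_insert.mp hj with rfl | hj1 <;>
          rcases Finset.mem_insert.mp hj' with rfl | hj2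
        · intro; rfl
        · have h2 : j' ≠ j := fun h => hiu (h ▸ hj2)
          rw [Function.update_self, Function.update_of_ne h2]
          intro h
          exact absurd (h ▸ he's j' hj2) (Finset.notMem_erase c s)
        · have h2 : j ≠ j' := fun h => hiu (h ▸ hj1)
          rw [Function.update_self, Function.update_of_ne h2]
          intro h
          exact absurd (h.symm ▸ he's j hj1) (Finset.notMem_erase c s)
        · have h1 : j ≠ i := fun h => hiu (h ▸ hj1)
          have h2 : j' ≠ i := fun h => hiu (h ▸ hj2)
          rw [Function.update_of_ne h1, Function.update_of_ne h2]
          exact he'inj j hj1 j' hj2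
      · intro c' hc'
        by_cases hcc : c' = c
        · exact ⟨i, Finset.mem_insert_self _ _, by simp [hcc]⟩
        · obtain ⟨j, hj, hej⟩ := he'surj c' (Finset.mem_erase.mpr ⟨hcc, hc'⟩)
          have h1 : j ≠ i := fun h => hiu (h ▸ hj)
          exact ⟨j, Finset.mem_insert_of_mem hj, by rw [Function.update_of_ne h1]; exact hej⟩
      · intro j hj
        rcases Finset.mem_insert.mp hj with rfl | hj'
        · simpa using hfc
        · have h1 : j ≠ i := fun h => hiu (h ▸ hj')
          rw [Function.update_of_ne h1]
          exact he'f j hj'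

private lemma isCycle_zpow_apply_eq_self_iff {β : Type*} [Fintype β] [DecidableEq β]
    {f : Equiv.Perm β} (hf : f.IsCycle) {x : β} (hx : f x ≠ x) (m : ℤ) :
    (f ^ m) x = x ↔ (f.support.card : ℤ) ∣ m := by
  rw [← hf.orderOf, orderOf_dvd_iff_zpow_eq_one]
  constructor
  · intro h
    obtain ⟨a, rfl | rfl⟩ := Int.eq_nat_or_neg m
    · rw [zpow_natCast] at h ⊢
      exact (hf.pow_eq_one_iff' hx).2 h
    · rw [zpow_neg, zpow_natCast] at h ⊢
      rw [inv_eq_one]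
      have h2 : (f ^ a) x = x := by nth_rewrite 1 [← h]; exact Equiv.apply_symm_apply (f ^ a) x
      exact (hf.pow_eq_one_iff' hx).2 h2
  · intro h; rw [h]; rfl

/-- Criterion for decomposability of `g^k` in the cyclic group `⟨g⟩`: `g^k` is decomposable
iff there is a proper nonempty subset `I` of the set of cycles such that
`gcd(d_I, d_{Iᶜ}) ∣ k` but neither `d_I ∣ k` nor `d_{Iᶜ} ∣ k`,
where `d_I = lcm(ℓ i : i ∈ I)`. -/
theorem decomposable_iff_exists_subset
    (n t : ℕ) (ℓ : Fin t → ℕ) (hℓ : ∀ i, 2 ≤ ℓ i)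
    (g : Equiv.Perm (Fin n))
    (hg : g.cycleType = Multiset.map ℓ Finset.univ.val)
    (k : ℕ) (hk : k < orderOf g) :
    DecomposableIn (Subgroup.zpowers g) (g ^ k)
      ↔ ∃ I : Finset (Fin t), I ≠ ∅ ∧ I ≠ Finset.univ ∧
          Nat.gcd (I.lcm ℓ) (Iᶜ.lcm ℓ) ∣ k ∧
          ¬ (I.lcm ℓ ∣ k) ∧ ¬ (Iᶜ.lcm ℓ ∣ k) := by
  classical
  -- the bijection between `Fin t` and the cycle factors
  obtain ⟨e, hes, hinj, hsurj, hef⟩ :=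
    exists_bij_aux (fun c : Equiv.Perm (Fin n) => c.support.card) ℓ
      Finset.univ g.cycleFactorsFinset (by rw [← hg, Equiv.Perm.cycleType_def]; rfl)
  have hes' : ∀ i, e i ∈ g.cycleFactorsFinset := fun i => hes i (Finset.mem_univ i)
  have hef' : ∀ i, (e i).support.card = ℓ i := fun i => hef i (Finset.mem_univ i)
  -- orderOf g = lcm of all the ℓ i
  have horder : orderOf g = Finset.univ.lcm ℓ := by
    rw [← Equiv.Perm.lcm_cycleType, hg, Finset.lcm_def]
  have hdvd_order : ∀ i, ℓ i ∣ orderOf g := by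
    intro i
    rw [horder]
    exact Finset.dvd_lcm (Finset.mem_univ i)
  -- the key pointwise criterion
  have key : ∀ (i : Fin t) (x : Fin n), x ∈ (e i).support → ∀ m : ℤ,
      ((g ^ m) x = x ↔ (ℓ i : ℤ) ∣ m) := by
    intro i x hx m
    have hxg : x ∈ g.support := Equiv.Perm.mem_cycleFactorsFinset_support_le (hes' i) hx
    have hgx : g x ≠ x := Equiv.Perm.mem_support.mp hxg
    have hcyc : e i = g.cycleOf x := Equiv.Perm.cycle_is_cycleOf hx (hes' i)
    have hc : (g.cycleOf x).IsCycle := Equiv.Perm.isCycle_cycleOf g hgx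
    have hcx : (g.cycleOf x) x ≠ x := by rwa [Equiv.Perm.cycleOf_apply_self]
    rw [← Equiv.Perm.cycleOf_zpow_apply_self g x, ← hef' i, hcyc]
    exact isCycle_zpow_apply_eq_self_iff hc hcx m
  -- if all ℓ i divide m then g ^ m = 1
  have all_dvd : ∀ m : ℤ, (∀ i, (ℓ i : ℤ) ∣ m) → g ^ m = 1 := by
    intro m hm
    rw [← orderOf_dvd_iff_zpow_eq_one, Int.natCast_dvd, horder]
    exact Finset.lcm_dvd fun i _ => Int.natCast_dvd.mp (hm i)
  constructor
  · rintro ⟨h, hmem, ⟨k', hdisj, hzk⟩, hne1, hnez⟩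
    obtain ⟨m, rfl⟩ := Subgroup.mem_zpowers_iff.mp hmem
    have hk' : k' = g ^ ((k : ℤ) - m) := by
      have h1 : k' = (g ^ m)⁻¹ * g ^ (k : ℤ) := by
        rw [zpow_natCast, hzk, ← mul_assoc, inv_mul_cancel, one_mul]
      rw [h1, ← zpow_neg, ← zpow_add]
      congr 1
      ring
    subst hk'
    set I : Finset (Fin t) := Finset.univ.filter (fun i => ¬ ((ℓ i : ℤ) ∣ m)) with hI
    have hImem : ∀ i, i ∈ I ↔ ¬ ((ℓ i : ℤ) ∣ m) := by
      intro i; simp [hI]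
    have hA : ∀ i ∈ I, (ℓ i : ℤ) ∣ (k : ℤ) - m := by
      intro i hi
      obtain ⟨x, hx⟩ := Finset.card_pos.mp (by rw [hef' i]; have := hℓ i; omega)
      rcases hdisj x with hfix | hfix
      · exact absurd ((key i x hx m).mp hfix) ((hImem i).mp hi)
      · exact (key i x hx _).mp hfix
    have hB : ∀ i ∉ I, (ℓ i : ℤ) ∣ m := by
      intro i hi
      by_contra hcon
      exact hi ((hImem i).mpr hcon)
    have hIne0 : I ≠ ∅ := by
      intro hIe
      apply hne1
      apply all_dvd
      intro i
      exact hB i (by rw [hIe]; exact Finset.notMem_empty i)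
    have hCdvd : (↑(I.lcm ℓ) : ℤ) ∣ (k : ℤ) - m :=
      Int.natCast_dvd.mpr (Finset.lcm_dvd fun i hi => Int.natCast_dvd.mp (hA i hi))
    have hDdvd : (↑(Iᶜ.lcm ℓ) : ℤ) ∣ m :=
      Int.natCast_dvd.mpr (Finset.lcm_dvd fun i hi =>
        Int.natCast_dvd.mp (hB i (Finset.mem_compl.mp hi)))
    refine ⟨I, hIne0, ?_, ?_, ?_, ?_⟩
    · -- I ≠ univ
      intro hIu
      apply hnez
      have hall : ∀ i, (ℓ i : ℤ) ∣ (k : ℤ) - m :=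
        fun i => hA i (by rw [hIu]; exact Finset.mem_univ i)
      have h1 : g ^ ((k : ℤ) - m) = 1 := all_dvd _ hall
      have : g ^ (k : ℕ) = g ^ m * g ^ ((k : ℤ) - m) := by
        rw [← zpow_add, ← zpow_natCast g k]; congr 1; ring
      rw [this, h1, mul_one]
    · -- gcd divides k
      rw [← Int.natCast_dvd_natCast]
      have h1 : (↑(Nat.gcd (I.lcm ℓ) (Iᶜ.lcm ℓ)) : ℤ) ∣ (k : ℤ) - m :=
        dvd_trans (Int.natCast_dvd_natCast.mpr (Nat.gcd_dvd_left _ _)) hCdvd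
      have h2 : (↑(Nat.gcd (I.lcm ℓ) (Iᶜ.lcm ℓ)) : ℤ) ∣ m :=
        dvd_trans (Int.natCast_dvd_natCast.mpr (Nat.gcd_dvd_right _ _)) hDdvd
      have := dvd_add h1 h2
      rwa [sub_add_cancel] at this
    · -- ¬ I.lcm ℓ ∣ k
      intro hdk
      obtain ⟨i, hi⟩ := Finset.nonempty_iff_ne_empty.mpr hIne0
      apply (hImem i).mp hi
      have h1 : (↑(I.lcm ℓ) : ℤ) ∣ m := by
        have h2 : (↑(I.lcm ℓ) : ℤ) ∣ (k : ℤ) := Int.natCast_dvd_natCast.mpr hdk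
        have := dvd_sub h2 hCdvd
        rwa [sub_sub_cancel] at this
      exact dvd_trans (Int.natCast_dvd_natCast.mpr (Finset.dvd_lcm hi)) h1
    · -- ¬ Iᶜ.lcm ℓ ∣ k
      intro hdk
      apply hnez
      have hall : ∀ i, (ℓ i : ℤ) ∣ (k : ℤ) - m := by
        intro i
        by_cases hi : i ∈ I
        · exact hA i hi
        · have h2 : (↑(Iᶜ.lcm ℓ) : ℤ) ∣ (k : ℤ) - m :=
            dvd_sub (Int.natCast_dvd_natCast.mpr hdk) hDdvd
          exact dvd_trans
            (Int.natCast_dvd_natCast.mpr (Finset.dvd_lcm (Finset.mem_compl.mpr hi))) h2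
      have h1 : g ^ ((k : ℤ) - m) = 1 := all_dvd _ hall
      have : g ^ (k : ℕ) = g ^ m * g ^ ((k : ℤ) - m) := by
        rw [← zpow_add, ← zpow_natCast g k]; congr 1; ring
      rw [this, h1, mul_one]
  · rintro ⟨I, hIne, hIuniv, hgcd, hIk, hIck⟩
    set a := I.lcm ℓ with ha
    set b := Iᶜ.lcm ℓ with hb
    obtain ⟨q, hq⟩ := hgcd
    -- construct m
    set m : ℤ := (b : ℤ) * Nat.gcdB a b * q with hm
    have hbm : (b : ℤ) ∣ m := ⟨Nat.gcdB a b * q, by rw [hm]; ring⟩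
    have ham : (a : ℤ) ∣ (k : ℤ) - m := by
      refine ⟨Nat.gcdA a b * q, ?_⟩
      have hbez : (Nat.gcd a b : ℤ) = a * Nat.gcdA a b + b * Nat.gcdB a b :=
        Nat.gcd_eq_gcd_ab a b
      have hkz : (k : ℤ) = (Nat.gcd a b : ℤ) * q := by exact_mod_cast hq
      rw [hkz, hbez, hm]; ring
    refine ⟨g ^ m, Subgroup.mem_zpowers_iff.mpr ⟨m, rfl⟩, ⟨g ^ ((k : ℤ) - m), ?_, ?_⟩, ?_, ?_⟩
    · -- Disjoint
      intro x
      by_cases hx : x ∈ g.support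
      · have hx' : g.cycleOf x ∈ g.cycleFactorsFinset :=
          Equiv.Perm.cycleOf_mem_cycleFactorsFinset_iff.mpr hx
        obtain ⟨i, _, hei⟩ := hsurj _ hx'
        have hxi : x ∈ (e i).support := by
          rw [hei]
          exact Equiv.Perm.mem_support_cycleOf_iff.mpr ⟨Equiv.Perm.SameCycle.refl g x, hx⟩
        by_cases hi : i ∈ I
        · right
          refine (key i x hxi _).mpr ?_
          exact dvd_trans (Int.natCast_dvd_natCast.mpr (Finset.dvd_lcm hi)) ham
        · left
          refine (key i x hxi _).mpr ?_
          exact dvd_trans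
            (Int.natCast_dvd_natCast.mpr (Finset.dvd_lcm (Finset.mem_compl.mpr hi))) hbm
      · left
        exact Equiv.Perm.zpow_apply_eq_self_of_apply_eq_self
          (Equiv.Perm.notMem_support.mp hx) m
    · -- product
      rw [← zpow_add, ← zpow_natCast g k]; congr 1; ring
    · -- g ^ m ≠ 1
      intro h1
      apply hIk
      have h2 : (orderOf g : ℤ) ∣ m := orderOf_dvd_iff_zpow_eq_one.mpr h1
      have h3 : (a : ℤ) ∣ m := by
        refine dvd_trans ?_ h2
        rw [Int.natCast_dvd_natCast, ha]
        exact Finset.lcm_dvd fun i hi => hdvd_order i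
      have h4 : (a : ℤ) ∣ (k : ℤ) := by
        have := dvd_add ham h3
        rwa [sub_add_cancel] at this
      exact_mod_cast h4
    · -- g ^ m ≠ g ^ k
      intro h1
      apply hIck
      have h0 : g ^ ((k : ℤ) - m) = 1 := by
        have : g ^ ((k : ℤ) - m) = (g ^ m)⁻¹ * g ^ (k : ℕ) := by
          rw [← zpow_natCast g k, ← zpow_neg, ← zpow_add]; congr 1; ring
        rw [this, ← h1, inv_mul_cancel]
      have h2 : (orderOf g : ℤ) ∣ (k : ℤ) - m := orderOf_dvd_iff_zpow_eq_one.mpr h0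
      have h3 : (b : ℤ) ∣ (k : ℤ) - m := by
        refine dvd_trans ?_ h2
        rw [Int.natCast_dvd_natCast, hb]
        exact Finset.lcm_dvd fun i hi => hdvd_order i
      have h4 : (b : ℤ) ∣ (k : ℤ) := by
        have := dvd_add h3 hbm
        rwa [sub_add_cancel] at this
      exact_mod_cast h4
end

section
/- Let G ≤ Equiv.Perm (Fin n) be a cyclic subgroup (G = ⟨g⟩ for some g), and let z ∈ G have disjoint cycle decomposition into r nontrivial cycles of lengths m 1, …, m r (i.e. z.cycleType = {m 1, …, m r} as a multiset, each m i ≥ 2). Then z is decomposable in G if and only if there exists a subset K with ∅ ≠ K ⊊ {1, …, r} such that gcd(m i, m j) = 1 for all i ∈ K and all j ∈ {1, …, r} \ K. -/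
open Equiv Equiv.Perm Subgroup

lemma orderOf_pow_div_prime {G : Type*} [Group G] [Finite G] {a : G} {p : ℕ} (hp : p.Prime)
    (hd : p ∣ orderOf a) : orderOf (a ^ (orderOf a / p)) = p := by
  rw [orderOf_pow, Nat.gcd_eq_right (Nat.div_dvd_of_dvd hd),
    Nat.div_div_self hd (orderOf_pos a).ne']

lemma mem_zpowers_pow_div {G : Type*} [Group G] [Finite G] {g u : G} {p : ℕ} (hp : p.Prime)
    (hu : u ∈ Subgroup.zpowers g) (hord : orderOf u = p) :
    u ∈ Subgroup.zpowers (g ^ (orderOf g / p)) := by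
  obtain ⟨c, rfl⟩ := Subgroup.mem_zpowers_iff.mp hu
  have hpN : p ∣ orderOf g := by
    rw [← hord]
    apply orderOf_dvd_of_pow_eq_one
    rw [← zpow_natCast, ← zpow_mul, mul_comm, zpow_mul, zpow_natCast, pow_orderOf_eq_one,
      one_zpow]
  have h1 : (g ^ c) ^ (p : ℤ) = 1 := by
    rw [zpow_natCast, ← hord]
    exact pow_orderOf_eq_one _
  have h2 : (orderOf g : ℤ) ∣ c * p := by
    rw [orderOf_dvd_iff_zpow_eq_one, zpow_mul]
    exact h1
  have h3 : ((orderOf g / p : ℕ) : ℤ) ∣ c := by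
    have hN : (orderOf g : ℤ) = (orderOf g / p : ℕ) * p := by
      norm_cast
      exact (Nat.div_mul_cancel hpN).symm
    rw [hN] at h2
    exact (mul_dvd_mul_iff_right (by exact_mod_cast hp.ne_zero : (p:ℤ) ≠ 0)).mp h2
  obtain ⟨d, rfl⟩ := h3
  rw [Subgroup.mem_zpowers_iff]
  exact ⟨d, by rw [← zpow_natCast, ← zpow_mul]⟩

lemma coprime_orderOf_of_disjoint {n : ℕ} {g h k : Equiv.Perm (Fin n)}
    (hh : h ∈ Subgroup.zpowers g) (hk : k ∈ Subgroup.zpowers g)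
    (hd : h.Disjoint k) : Nat.Coprime (orderOf h) (orderOf k) := by
  by_contra hco
  set p := (Nat.gcd (orderOf h) (orderOf k)).minFac with hpdef
  have hp : p.Prime := Nat.minFac_prime hco
  have hph : p ∣ orderOf h := (Nat.minFac_dvd _).trans (Nat.gcd_dvd_left _ _)
  have hpk : p ∣ orderOf k := (Nat.minFac_dvd _).trans (Nat.gcd_dvd_right _ _)
  set x := h ^ (orderOf h / p) with hxdef
  set y := k ^ (orderOf k / p) with hydef
  have hox : orderOf x = p := orderOf_pow_div_prime hp hph
  have hoy : orderOf y = p := orderOf_pow_div_prime hp hpk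
  set w := g ^ (orderOf g / p) with hwdef
  have hxg : x ∈ Subgroup.zpowers g := Subgroup.pow_mem _ hh _
  have hyg : y ∈ Subgroup.zpowers g := Subgroup.pow_mem _ hk _
  have hxw : x ∈ Subgroup.zpowers w := mem_zpowers_pow_div hp hxg hox
  have hyw : y ∈ Subgroup.zpowers w := mem_zpowers_pow_div hp hyg hoy
  have hpg : p ∣ orderOf g := by
    obtain ⟨c, hc⟩ := Subgroup.mem_zpowers_iff.mp hxg
    rw [← hc] at hox
    calc p = orderOf (g ^ c) := hox.symm
    _ ∣ orderOf g := by
        apply orderOf_dvd_of_pow_eq_one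
        rw [← zpow_natCast, ← zpow_mul, mul_comm, zpow_mul, zpow_natCast, pow_orderOf_eq_one,
          one_zpow]
  have how : orderOf w = p := orderOf_pow_div_prime hp hpg
  have heq : Subgroup.zpowers x = Subgroup.zpowers w := by
    apply Subgroup.eq_of_le_of_card_ge (Subgroup.zpowers_le.mpr hxw)
    rw [Nat.card_zpowers, Nat.card_zpowers, hox, how]
  have hyx : y ∈ Subgroup.zpowers x := heq ▸ hyw
  -- y is a power of both h and k, whose supports are disjoint
  have hyh : y ∈ Subgroup.zpowers h :=
    Subgroup.zpowers_le.mpr (Subgroup.pow_mem _ (Subgroup.mem_zpowers h) _) hyx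
  obtain ⟨i, hi⟩ := Subgroup.mem_zpowers_iff.mp hyh
  have hsh : y.support ≤ h.support := hi ▸ Equiv.Perm.support_zpow_le h i
  have hsk : y.support ≤ k.support := by
    rw [hydef, ← zpow_natCast]
    exact Equiv.Perm.support_zpow_le k _
  have : y.support = ∅ := by
    have hds := Equiv.Perm.disjoint_iff_disjoint_support.mp hd
    exact Finset.eq_empty_of_forall_notMem fun a ha =>
      Finset.disjoint_left.mp hds (hsh ha) (hsk ha)
  have hy1 : y = 1 := Equiv.Perm.support_eq_empty_iff.mp this
  rw [hy1, orderOf_one] at hoy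
  exact hp.one_lt.ne hoy

section Helpers

open Equiv Equiv.Perm Subgroup

lemma cycle_orderOf_exists {n r : ℕ} {z : Equiv.Perm (Fin n)} {m : Fin r → ℕ}
    (hm : ∀ i, 2 ≤ m i)
    (hzc : z.cycleType = Multiset.map m Finset.univ.val) (i : Fin r) :
    ∃ x : Fin n, z x ≠ x ∧ orderOf (z.cycleOf x) = m i := by
  have hmem : m i ∈ z.cycleType := by
    rw [hzc]
    exact Multiset.mem_map_of_mem _ (Finset.mem_val.mpr (Finset.mem_univ i))
  rw [Equiv.Perm.cycleType_def] at hmem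
  obtain ⟨c, hc, hcard⟩ := Multiset.mem_map.mp hmem
  have hc' : c ∈ z.cycleFactorsFinset := Finset.mem_val.mp hc
  have h2 : c.support.card = m i := hcard
  have hsupp : c.support.Nonempty := Finset.card_pos.mp (by rw [h2]; exact lt_of_lt_of_le zero_lt_two (hm i))
  obtain ⟨x, hxc⟩ := hsupp
  have hcc : c = z.cycleOf x := Equiv.Perm.cycle_is_cycleOf hxc hc'
  obtain ⟨hcyc, hagree⟩ := Equiv.Perm.mem_cycleFactorsFinset_iff.mp hc'
  have hzx : z x ≠ x := by
    rw [← hagree x hxc]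
    exact Equiv.Perm.mem_support.mp hxc
  exact ⟨x, hzx, by rw [← hcc, hcyc.orderOf, h2]⟩

lemma cycleOf_orderOf_mem {n r : ℕ} {z : Equiv.Perm (Fin n)} {m : Fin r → ℕ}
    (hzc : z.cycleType = Multiset.map m Finset.univ.val) {x : Fin n} (hx : z x ≠ x) :
    ∃ i : Fin r, orderOf (z.cycleOf x) = m i := by
  have hc : z.cycleOf x ∈ z.cycleFactorsFinset :=
    Equiv.Perm.cycleOf_mem_cycleFactorsFinset_iff.mpr (Equiv.Perm.mem_support.mpr hx)
  have hmem : (z.cycleOf x).support.card ∈ z.cycleType := by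
    rw [Equiv.Perm.cycleType_def]
    exact Multiset.mem_map_of_mem _ (Finset.mem_val.mpr hc)
  rw [hzc] at hmem
  obtain ⟨i, _, hi⟩ := Multiset.mem_map.mp hmem
  exact ⟨i, by rw [(Equiv.Perm.isCycle_cycleOf z hx).orderOf]; exact hi.symm⟩

end Helpers


/-- An element `z` of a cyclic permutation group, with cycle lengths `m 1, …, m r`, is
decomposable iff the index set splits into two nonempty parts on which the cycle lengths
are coprime. -/
theorem decomposable_iff_coprime_split
    (n r : ℕ) (G : Subgroup (Equiv.Perm (Fin n)))
    (hcyc : ∃ g : Equiv.Perm (Fin n), G = Subgroup.zpowers g)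
    (z : Equiv.Perm (Fin n)) (hz : z ∈ G)
    (m : Fin r → ℕ) (hm : ∀ i, 2 ≤ m i)
    (hzc : z.cycleType = Multiset.map m Finset.univ.val) :
    DecomposableIn G z
      ↔ ∃ K : Finset (Fin r), K ≠ ∅ ∧ K ≠ Finset.univ ∧
          ∀ i ∈ K, ∀ j ∉ K, Nat.gcd (m i) (m j) = 1 := by
  constructor
  · rintro ⟨h, hG, ⟨k, hdisj, hzhk⟩, h1, hz'⟩
    obtain ⟨g, rfl⟩ := hcyc
    have hkG : k ∈ Subgroup.zpowers g := by
      have hk : k = h⁻¹ * z := by rw [hzhk]; group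
      rw [hk]; exact mul_mem (inv_mem hG) hz
    have hk1 : k ≠ 1 := by rintro rfl; rw [mul_one] at hzhk; exact hz' hzhk.symm
    have hC : z.cycleType = h.cycleType + k.cycleType := by
      rw [hzhk]; exact Equiv.Perm.Disjoint.cycleType_mul hdisj
    have hcop : Nat.Coprime (orderOf h) (orderOf k) := coprime_orderOf_of_disjoint hG hkG hdisj
    have hdvdh : ∀ {c : ℕ}, c ∈ h.cycleType → c ∣ orderOf h := fun hc =>
      (Equiv.Perm.lcm_cycleType h) ▸ Multiset.dvd_lcm hc
    have hdvdk : ∀ {c : ℕ}, c ∈ k.cycleType → c ∣ orderOf k := fun hc =>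
      (Equiv.Perm.lcm_cycleType k) ▸ Multiset.dvd_lcm hc
    refine ⟨Finset.univ.filter (fun i => m i ∣ orderOf h), ?_, ?_, ?_⟩
    · -- nonempty
      have hhne : h.cycleType ≠ 0 := fun e => h1 (Equiv.Perm.cycleType_eq_zero.mp e)
      obtain ⟨c, hcmem⟩ := Multiset.exists_mem_of_ne_zero hhne
      have hcz : c ∈ z.cycleType := by rw [hC]; exact Multiset.mem_add.mpr (Or.inl hcmem)
      rw [hzc] at hcz
      obtain ⟨i, _, rfl⟩ := Multiset.mem_map.mp hcz
      exact Finset.ne_empty_of_mem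
        (Finset.mem_filter.mpr ⟨Finset.mem_univ i, hdvdh hcmem⟩)
    · -- not univ
      have hkne : k.cycleType ≠ 0 := fun e => hk1 (Equiv.Perm.cycleType_eq_zero.mp e)
      obtain ⟨c, hcmem⟩ := Multiset.exists_mem_of_ne_zero hkne
      have hcz : c ∈ z.cycleType := by rw [hC]; exact Multiset.mem_add.mpr (Or.inr hcmem)
      rw [hzc] at hcz
      obtain ⟨j, _, rfl⟩ := Multiset.mem_map.mp hcz
      intro he
      have hjK : j ∈ Finset.univ.filter (fun i => m i ∣ orderOf h) :=
        Finset.eq_univ_iff_forall.mp he j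
      have hjh : m j ∣ orderOf h := (Finset.mem_filter.mp hjK).2
      have : m j ∣ Nat.gcd (orderOf h) (orderOf k) := Nat.dvd_gcd hjh (hdvdk hcmem)
      rw [hcop] at this
      have := Nat.le_of_dvd one_pos this
      have := hm j
      omega
    · intro i hiK j hjK
      have hih : m i ∣ orderOf h := (Finset.mem_filter.mp hiK).2
      have hjz : m j ∈ z.cycleType := by
        rw [hzc]
        exact Multiset.mem_map_of_mem _ (Finset.mem_val.mpr (Finset.mem_univ j))
      rw [hC] at hjz
      rcases Multiset.mem_add.mp hjz with hjh | hjk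
      · exact absurd (Finset.mem_filter.mpr ⟨Finset.mem_univ j, hdvdh hjh⟩) hjK
      · have : Nat.gcd (m i) (m j) ∣ Nat.gcd (orderOf h) (orderOf k) :=
          Nat.dvd_gcd ((Nat.gcd_dvd_left _ _).trans hih)
            ((Nat.gcd_dvd_right _ _).trans (hdvdk hjk))
        rw [hcop] at this
        exact Nat.dvd_one.mp this
  · rintro ⟨K, hKne, hKuniv, hcop⟩
    obtain ⟨i0, hi0⟩ := Finset.nonempty_iff_ne_empty.mpr hKne
    obtain ⟨j0, hj0⟩ : ∃ j, j ∉ K := by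
      by_contra hc
      push_neg at hc
      exact hKuniv (Finset.eq_univ_iff_forall.mpr hc)
    set a := K.lcm m with ha
    set b := Kᶜ.lcm m with hb
    have hab : Nat.Coprime a b := by
      by_contra hco
      set p := (Nat.gcd a b).minFac with hp'
      have hp : p.Prime := Nat.minFac_prime hco
      have hpa : p ∣ a := (Nat.minFac_dvd _).trans (Nat.gcd_dvd_left _ _)
      have hpb : p ∣ b := (Nat.minFac_dvd _).trans (Nat.gcd_dvd_right _ _)
      have h1 : p ∣ ∏ i ∈ K, m i :=
        hpa.trans (Finset.lcm_dvd fun i hi => Finset.dvd_prod_of_mem m hi)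
      have h2 : p ∣ ∏ j ∈ Kᶜ, m j :=
        hpb.trans (Finset.lcm_dvd fun j hj => Finset.dvd_prod_of_mem m hj)
      obtain ⟨i, hiK, hpi⟩ := (hp.prime.dvd_finset_prod_iff m).mp h1
      obtain ⟨j, hjK, hpj⟩ := (hp.prime.dvd_finset_prod_iff m).mp h2
      have hdg : p ∣ Nat.gcd (m i) (m j) := Nat.dvd_gcd hpi hpj
      rw [hcop i hiK j (Finset.mem_compl.mp hjK)] at hdg
      exact hp.one_lt.ne' (Nat.dvd_one.mp hdg)
    obtain ⟨t, ht1, ht0⟩ := Nat.chineseRemainder hab 1 0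
    have hta : (a : ℤ) ∣ (t : ℤ) - 1 := by
      have := ht1.dvd
      rwa [← dvd_neg, neg_sub] at this
    have htb : (b : ℤ) ∣ (t : ℤ) := by
      have := ht0.dvd
      rwa [Nat.cast_zero, zero_sub, dvd_neg] at this
    have hdvdK : ∀ i ∈ K, ((m i : ℤ)) ∣ (t : ℤ) - 1 := fun i hi =>
      (Int.natCast_dvd_natCast.mpr (Finset.dvd_lcm hi)).trans hta
    have hdvdKc : ∀ i ∉ K, ((m i : ℤ)) ∣ (t : ℤ) := fun i hi =>
      (Int.natCast_dvd_natCast.mpr (Finset.dvd_lcm (Finset.mem_compl.mpr hi))).trans htb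
    have key : ∀ x : Fin n, ∀ s : ℤ, ((orderOf (z.cycleOf x) : ℤ) ∣ s) → (z ^ s) x = x := by
      intro x s hs
      rw [← Equiv.Perm.cycleOf_zpow_apply_self, orderOf_dvd_iff_zpow_eq_one.mp hs]
      rfl
    have key2 : ∀ x : Fin n, ∀ s : ℤ, ((orderOf (z.cycleOf x) : ℤ) ∣ s - 1) →
        (z ^ s) x = z x := by
      intro x s hs
      rw [← Equiv.Perm.cycleOf_zpow_apply_self]
      have h1 : (z.cycleOf x) ^ (s - 1) = 1 := orderOf_dvd_iff_zpow_eq_one.mp hs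
      have e : s = (s - 1) + 1 := by ring
      rw [e, zpow_add, h1, one_mul, zpow_one, Equiv.Perm.cycleOf_apply_self]
    refine ⟨z ^ (t : ℤ), Subgroup.zpow_mem G hz _, ⟨z ^ (1 - (t : ℤ)), ?_, ?_⟩, ?_, ?_⟩
    · -- disjoint
      intro x
      by_cases hx : z x = x
      · left; exact Equiv.Perm.zpow_apply_eq_self_of_apply_eq_self hx _
      · obtain ⟨i, hi⟩ := cycleOf_orderOf_mem hzc hx
        by_cases hiK : i ∈ K
        · right
          apply key
          rw [hi]
          have := hdvdK i hiK
          rwa [← dvd_neg, neg_sub] at this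
        · left
          apply key
          rw [hi]
          exact hdvdKc i hiK
    · -- z = h * k
      have e : (t : ℤ) + (1 - (t : ℤ)) = 1 := by ring
      rw [← zpow_add, e, zpow_one]
    · -- ≠ 1
      obtain ⟨x, hzx, hordx⟩ := cycle_orderOf_exists hm hzc i0
      intro he
      apply hzx
      have : (z ^ (t : ℤ)) x = z x := key2 x _ (by rw [hordx]; exact hdvdK i0 hi0)
      rw [he] at this
      exact this.symm
    · -- ≠ z
      obtain ⟨y, hzy, hordy⟩ := cycle_orderOf_exists hm hzc j0
      intro he
      apply hzy
      have : (z ^ (t : ℤ)) y = y := key y _ (by rw [hordy]; exact hdvdKc j0 hj0)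
      rw [he] at this
      exact this
end

section
/- Let G ≤ Equiv.Perm (Fin n) be a subgroup. Then the number of elements h ∈ G with h ≠ 1 that are indecomposable in G equals the number of edges of P(G) containing the vertex M(1), i.e. Set.ncard {h ∈ G | h ≠ 1 ∧ h is indecomposable in G} = Set.ncard {F : Set (Matrix (Fin n) (Fin n) ℝ) | IsExposed ℝ (P(G)) F ∧ M(1) ∈ F ∧ Module.finrank ℝ (vectorSpan ℝ F) = 1}. -/
namespace PermPolyAux

variable {n : ℕ}

noncomputable abbrev pm (σ : Equiv.Perm (Fin n)) : Matrix (Fin n) (Fin n) ℝ := σ.permMatrix ℝ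

lemma pm_apply (σ : Equiv.Perm (Fin n)) (i j : Fin n) :
    pm σ i j = if σ i = j then 1 else 0 := by
  simp [Equiv.Perm.permMatrix, PEquiv.toMatrix, Equiv.toPEquiv_apply, Matrix.of_apply, eq_comm]

lemma pm_injective : Function.Injective (pm (n := n)) := by
  intro σ τ h
  ext i
  have := congrFun (congrFun h i) (σ i)
  rw [pm_apply, pm_apply, if_pos rfl] at this
  by_contra hne
  rw [if_neg (by exact fun hh => hne (hh ▸ rfl))] at this
  norm_num at this

lemma pm_mem_segment {σ ρ τ : Equiv.Perm (Fin n)}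
    (h : pm τ ∈ segment ℝ (pm σ) (pm ρ)) : τ = σ ∨ τ = ρ := by
  obtain ⟨a, b, ha, hb, hab, hx⟩ := h
  rcases eq_or_lt_of_le ha with ha0 | ha0
  · right
    have hb1 : b = 1 := by linarith
    apply pm_injective
    rw [← hx, ← ha0, hb1]; simp
  rcases eq_or_lt_of_le hb with hb0 | hb0
  · left
    have ha1 : a = 1 := by linarith
    apply pm_injective
    rw [← hx, ← hb0, ha1]; simp
  · left
    apply Equiv.Perm.ext
    intro j
    symm
    have := congrFun (congrFun hx j) (τ j)
    simp only [Matrix.add_apply, Matrix.smul_apply, pm_apply, smul_eq_mul, if_pos rfl] at this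
    by_contra hne
    rw [if_neg hne] at this
    split_ifs at this <;> nlinarith

lemma isSubelement_iff {h z : Equiv.Perm (Fin n)} :
    IsSubelement h z ↔ ∀ j, h j = j ∨ h j = z j := by
  constructor
  · rintro ⟨k, hd, rfl⟩ j
    rcases hd j with hj | hj
    · exact Or.inl hj
    · right; rw [Equiv.Perm.mul_apply, hj]
  · intro hp
    refine ⟨h⁻¹ * z, fun j => ?_, by group⟩
    rcases hp j with hj | hj
    · exact Or.inl hj
    · right
      rw [Equiv.Perm.mul_apply, ← hj, Equiv.Perm.inv_def, Equiv.symm_apply_apply]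

lemma isSubelement_one (z : Equiv.Perm (Fin n)) : IsSubelement 1 z :=
  isSubelement_iff.mpr fun _ => Or.inl rfl

lemma isSubelement_self (z : Equiv.Perm (Fin n)) : IsSubelement z z :=
  isSubelement_iff.mpr fun _ => Or.inr rfl

lemma midpoint_identity {h k : Equiv.Perm (Fin n)} (hd : h.Disjoint k) :
    pm h + pm k = pm 1 + pm (h * k) := by
  ext i j
  simp only [Matrix.add_apply, pm_apply, Equiv.Perm.mul_apply]
  rw [Equiv.Perm.one_apply]
  rcases hd i with hi | hi
  · rcases hd (k i) with hki | hki
    · simp only [hki, hi]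
      try ring
    · have h2 : k i = i := k.injective hki
      simp only [h2, hi]
  · simp only [hi]
    ring

/-- The linear functional `X ↦ ∑ j, (X j j + X j (z j))`. -/
def Lz (z : Equiv.Perm (Fin n)) : Matrix (Fin n) (Fin n) ℝ →ₗ[ℝ] ℝ where
  toFun X := ∑ j, (X j j + X j (z j))
  map_add' X Y := by
    simp only [Matrix.add_apply]
    rw [← Finset.sum_add_distrib]
    congr 1; ext j; ring
  map_smul' c X := by
    simp only [Matrix.smul_apply, smul_eq_mul, RingHom.id_apply]
    rw [Finset.mul_sum]
    congr 1; ext j; ring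

lemma Lz_pm (z σ : Equiv.Perm (Fin n)) :
    Lz z (pm σ) = ∑ j, (((if σ j = j then 1 else 0) : ℝ) + (if σ j = z j then 1 else 0)) := by
  simp only [Lz, LinearMap.coe_mk, AddHom.coe_mk, pm_apply]

lemma Lz_term_le (z σ : Equiv.Perm (Fin n)) (j : Fin n) :
    (((if σ j = j then 1 else 0) : ℝ) + (if σ j = z j then 1 else 0))
      ≤ (((if (1 : Equiv.Perm (Fin n)) j = j then 1 else 0) : ℝ)
        + (if (1 : Equiv.Perm (Fin n)) j = z j then 1 else 0)) := by
  rw [Equiv.Perm.one_apply, if_pos rfl]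
  by_cases hz : j = z j
  · rw [if_pos hz]
    split_ifs <;> norm_num
  · rw [if_neg hz]
    by_cases h1 : σ j = j
    · rw [if_pos h1, if_neg (fun hh : σ j = z j => hz (h1.symm.trans hh))]
    · rw [if_neg h1]
      split_ifs <;> norm_num

lemma Lz_pm_le (z σ : Equiv.Perm (Fin n)) : Lz z (pm σ) ≤ Lz z (pm 1) := by
  rw [Lz_pm, Lz_pm]
  exact Finset.sum_le_sum fun j _ => Lz_term_le z σ j

lemma Lz_term_eq_iff (z σ : Equiv.Perm (Fin n)) (j : Fin n) :
    ((((if σ j = j then 1 else 0) : ℝ) + (if σ j = z j then 1 else 0))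
      = (((if (1 : Equiv.Perm (Fin n)) j = j then 1 else 0) : ℝ)
        + (if (1 : Equiv.Perm (Fin n)) j = z j then 1 else 0)))
      ↔ (σ j = j ∨ σ j = z j) := by
  rw [Equiv.Perm.one_apply, if_pos rfl]
  by_cases hz : j = z j
  · rw [if_pos hz]
    by_cases h1 : σ j = j
    · rw [if_pos h1, if_pos (h1.trans hz)]
      simp [h1]
    · rw [if_neg h1, if_neg (fun hh : σ j = z j => h1 (hh.trans hz.symm))]
      constructor
      · intro h; norm_num at h
      · rintro (h | h)
        · exact absurd h h1
        · exact absurd (h.trans hz.symm) h1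
  · rw [if_neg hz]
    by_cases h1 : σ j = j
    · rw [if_pos h1, if_neg (fun hh : σ j = z j => hz (h1.symm.trans hh))]
      simp [h1]
    · rw [if_neg h1]
      by_cases h2 : σ j = z j
      · rw [if_pos h2]; simp [h2]
      · rw [if_neg h2]
        constructor
        · intro h; norm_num at h
        · rintro (h | h)
          · exact absurd h h1
          · exact absurd h h2

lemma Lz_pm_eq_iff (z σ : Equiv.Perm (Fin n)) :
    Lz z (pm σ) = Lz z (pm 1) ↔ IsSubelement σ z := by
  rw [Lz_pm, Lz_pm,
    Finset.sum_eq_sum_iff_of_le fun j _ => Lz_term_le z σ j, isSubelement_iff]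
  constructor
  · intro hj j
    exact (Lz_term_eq_iff z σ j).mp (hj j (Finset.mem_univ j))
  · intro hp j _
    exact (Lz_term_eq_iff z σ j).mpr (hp j)

/-- Points of a convex hull where a linear functional attains its sup over the base set
lie in the hull of the maximizers. -/
lemma mem_hull_maximizers {E : Type*} [AddCommGroup E] [Module ℝ E]
    (L : E →ₗ[ℝ] ℝ) (m : ℝ) (s : Set E) (hs : ∀ y ∈ s, L y ≤ m)
    {x : E} (hx : x ∈ convexHull ℝ s) (hxm : L x = m) :
    x ∈ convexHull ℝ {y ∈ s | L y = m} := by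
  rw [convexHull_eq] at hx
  obtain ⟨ι, t, w, zf, hw0, hw1, hz, hcm⟩ := hx
  have hsum : ∑ i ∈ t, w i * (m - L (zf i)) = 0 := by
    have hLx : L x = ∑ i ∈ t, w i * L (zf i) := by
      rw [← hcm, Finset.centerMass_eq_of_sum_1 _ _ hw1, map_sum]
      simp [smul_eq_mul]
    have : ∑ i ∈ t, w i * (m - L (zf i)) = m * ∑ i ∈ t, w i - ∑ i ∈ t, w i * L (zf i) := by
      rw [Finset.mul_sum, ← Finset.sum_sub_distrib]
      congr 1; ext i; ring
    rw [this, hw1, ← hLx, hxm]; ring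
  have hterm : ∀ i ∈ t, w i * (m - L (zf i)) = 0 :=
    (Finset.sum_eq_zero_iff_of_nonneg fun i hi =>
      mul_nonneg (hw0 i hi) (by linarith [hs (zf i) (hz i hi)])).mp hsum
  rw [← hcm, ← Finset.centerMass_filter_ne_zero]
  have hpos : 0 < ∑ i ∈ t.filter (w · ≠ 0), w i := by
    rw [Finset.sum_filter_ne_zero, hw1]
    norm_num
  refine Finset.centerMass_mem_convexHull _ (fun i hi => hw0 i (Finset.mem_filter.mp hi).1)
    hpos fun i hi => ?_
  obtain ⟨hit, hwi⟩ := Finset.mem_filter.mp hi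
  refine ⟨hz i hit, ?_⟩
  have := hterm i hit
  rcases mul_eq_zero.mp this with h | h
  · exact absurd h hwi
  · linarith

lemma hull_le_max {E : Type*} [AddCommGroup E] [Module ℝ E]
    (L : E →ₗ[ℝ] ℝ) (m : ℝ) (s : Set E) (hs : ∀ y ∈ s, L y ≤ m)
    {x : E} (hx : x ∈ convexHull ℝ s) : L x ≤ m := by
  have : convexHull ℝ s ⊆ {y | L y ≤ m} :=
    convexHull_min hs (convex_halfSpace_le ⟨L.map_add, L.map_smul⟩ m)
  exact this hx

lemma vectorSpan_segment (a b : Matrix (Fin n) (Fin n) ℝ) :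
    vectorSpan ℝ (segment ℝ a b) = Submodule.span ℝ {a - b} := by
  rw [← convexHull_pair, ← direction_affineSpan, affineSpan_convexHull,
    direction_affineSpan, vectorSpan_pair, vsub_eq_sub]

/-- Three permutation matrices on an affine line: the third must be one of the endpoints. -/
lemma on_line {σ z : Equiv.Perm (Fin n)} {c : ℝ}
    (hc : pm σ - pm 1 = c • (pm z - pm 1)) : σ = 1 ∨ σ = z := by
  by_contra hcon
  push_neg at hcon
  obtain ⟨hσ1, hσz⟩ := hcon
  have hj0 : ∃ j0, σ j0 ≠ j0 := by
    by_contra hh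
    push_neg at hh
    exact hσ1 (Equiv.Perm.ext hh)
  have hj1 : ∃ j1, σ j1 ≠ z j1 := by
    by_contra hh
    push_neg at hh
    exact hσz (Equiv.Perm.ext hh)
  obtain ⟨j0, hj0⟩ := hj0
  obtain ⟨j1, hj1⟩ := hj1
  have h0 := congrFun (congrFun hc j0) (σ j0)
  have h1 := congrFun (congrFun hc j1) (σ j1)
  simp only [Matrix.sub_apply, Matrix.smul_apply, pm_apply] at h0 h1
  rw [Equiv.Perm.one_apply] at h0 h1
  simp only [smul_eq_mul, eq_self_iff_true, if_true,
    if_neg (fun hh : j0 = σ j0 => hj0 hh.symm)] at h0 h1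
  rw [if_neg (fun hh : z j1 = σ j1 => hj1 hh.symm)] at h1
  by_cases hzj0 : z j0 = σ j0
  · rw [if_pos hzj0] at h0
    have hc1 : c = 1 := by linarith
    rw [hc1] at h1
    split_ifs at h1 <;> linarith
  · rw [if_neg hzj0] at h0
    norm_num at h0

variable (G : Subgroup (Equiv.Perm (Fin n)))

lemma pm_mem_P {σ : Equiv.Perm (Fin n)} (hσ : σ ∈ G) : pm σ ∈ permPolytope n G :=
  subset_convexHull ℝ _ ⟨σ, hσ, rfl⟩

lemma P_le {L : Matrix (Fin n) (Fin n) ℝ →ₗ[ℝ] ℝ} {m : ℝ}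
    (hs : ∀ σ ∈ G, L (pm σ) ≤ m) {x} (hx : x ∈ permPolytope n G) : L x ≤ m := by
  refine hull_le_max L m _ ?_ hx
  rintro y ⟨σ, hσ, rfl⟩
  exact hs σ hσ

/-- indecomposable nontrivial element gives an edge -/
lemma forward {z : Equiv.Perm (Fin n)} (hzG : z ∈ G) (hz1 : z ≠ 1)
    (hind : ¬ DecomposableIn G z) :
    IsExposed ℝ (permPolytope n G) (segment ℝ (pm 1) (pm z)) ∧
    pm 1 ∈ segment ℝ (pm 1) (pm z) ∧
    Module.finrank ℝ (vectorSpan ℝ (segment ℝ (pm 1) (pm z))) = 1 := by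
  have hsub_cases : ∀ σ ∈ G, IsSubelement σ z → σ = 1 ∨ σ = z := by
    intro σ hσ hs
    by_contra hcon
    push_neg at hcon
    exact hind ⟨σ, hσ, hs, hcon.1, hcon.2⟩
  set m := Lz z (pm 1) with hm
  have hVle : ∀ σ ∈ G, Lz z (pm σ) ≤ m := fun σ _ => Lz_pm_le z σ
  have hmaxset : {y ∈ {M : Matrix (Fin n) (Fin n) ℝ | ∃ σ ∈ G, M = σ.permMatrix ℝ} |
      Lz z y = m} = {pm 1, pm z} := by
    ext y
    constructor
    · rintro ⟨⟨σ, hσ, rfl⟩, hy⟩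
      rcases hsub_cases σ hσ ((Lz_pm_eq_iff z σ).mp hy) with rfl | rfl
      · exact Or.inl rfl
      · exact Or.inr rfl
    · rintro (rfl | rfl)
      · exact ⟨⟨1, one_mem G, rfl⟩, rfl⟩
      · exact ⟨⟨z, hzG, rfl⟩, (Lz_pm_eq_iff z z).mpr (isSubelement_self z)⟩
  have hseg : segment ℝ (pm 1) (pm z)
      = {x ∈ permPolytope n G | ∀ y ∈ permPolytope n G,
          (LinearMap.toContinuousLinearMap (Lz z)) y
            ≤ (LinearMap.toContinuousLinearMap (Lz z)) x} := by
    ext x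
    simp only [LinearMap.coe_toContinuousLinearMap', Set.mem_setOf_eq]
    constructor
    · intro hx
      obtain ⟨a, b, ha, hb, hab, hx'⟩ := hx
      have hxP : x ∈ permPolytope n G := by
        have : segment ℝ (pm 1) (pm z) ⊆ permPolytope n G := by
          rw [← convexHull_pair]
          apply convexHull_min _ (convex_convexHull ℝ _)
          rintro y (rfl | rfl)
          · exact pm_mem_P G (one_mem G)
          · exact pm_mem_P G hzG
        exact this ⟨a, b, ha, hb, hab, hx'⟩
      have hLx : Lz z x = m := by
        rw [← hx', map_add, map_smul, map_smul, smul_eq_mul, smul_eq_mul,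
          ← hm, (Lz_pm_eq_iff z z).mpr (isSubelement_self z)]
        rw [← hm, ← add_mul, hab, one_mul]
      exact ⟨hxP, fun y hy => by rw [hLx]; exact P_le G hVle hy⟩
    · rintro ⟨hxP, hxmax⟩
      have hLx : Lz z x = m := le_antisymm (P_le G hVle hxP)
        (hxmax (pm 1) (pm_mem_P G (one_mem G)))
      have := mem_hull_maximizers (Lz z) m _
        (fun y hy => by rcases hy with ⟨σ, hσ, rfl⟩; exact hVle σ hσ) hxP hLx
      rw [hmaxset, convexHull_pair] at this
      exact this
  have hne : pm (1 : Equiv.Perm (Fin n)) - pm z ≠ 0 := by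
    intro hh
    exact hz1 (pm_injective (sub_eq_zero.mp hh)).symm
  refine ⟨?_, left_mem_segment ℝ _ _, ?_⟩
  · intro _
    exact ⟨LinearMap.toContinuousLinearMap (Lz z), hseg⟩
  · rw [vectorSpan_segment]
    exact finrank_span_singleton hne

/-- every edge through the identity vertex comes from a nontrivial indecomposable element -/
lemma backward {F : Set (Matrix (Fin n) (Fin n) ℝ)}
    (hexp : IsExposed ℝ (permPolytope n G) F) (h1F : pm 1 ∈ F)
    (hrk : Module.finrank ℝ (vectorSpan ℝ F) = 1) :
    ∃ z, (z ∈ G ∧ z ≠ 1 ∧ ¬ DecomposableIn G z) ∧ F = segment ℝ (pm 1) (pm z) := by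
  obtain ⟨l, hF⟩ := hexp ⟨pm 1, h1F⟩
  set m := l (pm 1) with hm
  have h1F' := h1F
  rw [hF] at h1F'
  obtain ⟨h1P, hmaxP⟩ := h1F'
  have hVle : ∀ σ ∈ G, l (pm σ) ≤ m := fun σ hσ => hmaxP _ (pm_mem_P G hσ)
  have hPle : ∀ x ∈ permPolytope n G, l x ≤ m := by
    intro x hx
    exact P_le G (L := l.toLinearMap) hVle hx
  -- membership in F for maximizing vertices
  have hmemF : ∀ σ ∈ G, l (pm σ) = m → pm σ ∈ F := by
    intro σ hσ hl
    rw [hF]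
    exact ⟨pm_mem_P G hσ, fun y hy => by rw [hl]; exact hPle y hy⟩
  -- F is the hull of the maximizers
  have hFhull : F = convexHull ℝ {y ∈ {M : Matrix (Fin n) (Fin n) ℝ | ∃ σ ∈ G,
      M = σ.permMatrix ℝ} | l y = m} := by
    apply Set.Subset.antisymm
    · intro x hx
      rw [hF] at hx
      obtain ⟨hxP, hxmax⟩ := hx
      have hLx : l x = m := le_antisymm (hPle x hxP) (hxmax (pm 1) (pm_mem_P G (one_mem G)))
      exact mem_hull_maximizers l.toLinearMap m _
        (fun y hy => by rcases hy with ⟨σ, hσ, rfl⟩; exact hVle σ hσ) hxP hLx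
    · apply convexHull_min
      · rintro y ⟨⟨σ, hσ, rfl⟩, hy⟩
        exact hmemF σ hσ hy
      · -- F is convex
        rw [hF]
        intro x hx y hy a b ha hb hab
        refine ⟨(convex_convexHull ℝ _) hx.1 hy.1 ha hb hab, fun w hw => ?_⟩
        have h1 := mul_le_mul_of_nonneg_left (hx.2 w hw) ha
        have h2 := mul_le_mul_of_nonneg_left (hy.2 w hw) hb
        rw [map_add, map_smul, map_smul, smul_eq_mul, smul_eq_mul]
        have h3 : a * l w + b * l w = l w := by rw [← add_mul, hab, one_mul]
        linarith
  -- find a nontrivial maximizer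
  have hz : ∃ z ∈ G, z ≠ 1 ∧ l (pm z) = m := by
    by_contra hcon
    push_neg at hcon
    have : {y ∈ {M : Matrix (Fin n) (Fin n) ℝ | ∃ σ ∈ G, M = σ.permMatrix ℝ} | l y = m}
        = {pm 1} := by
      apply Set.Subset.antisymm
      · rintro y ⟨⟨σ, hσ, rfl⟩, hy⟩
        by_cases hσ1 : σ = 1
        · rw [hσ1]; rfl
        · exact absurd hy (hcon σ hσ hσ1)
      · rintro y rfl
        exact ⟨⟨1, one_mem G, rfl⟩, rfl⟩
    rw [this, convexHull_singleton] at hFhull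
    rw [hFhull, vectorSpan_singleton] at hrk
    simp at hrk
  obtain ⟨z, hzG, hz1, hzl⟩ := hz
  have hpmzF : pm z ∈ F := hmemF z hzG hzl
  -- the span of the edge direction is the whole vectorSpan of F
  have hspan : Submodule.span ℝ {pm z - pm 1} = vectorSpan ℝ F := by
    have hle : Submodule.span ℝ {pm z - pm 1} ≤ vectorSpan ℝ F := by
      rw [Submodule.span_le, Set.singleton_subset_iff]
      exact vsub_mem_vectorSpan ℝ hpmzF h1F
    have hne : pm z - pm (1 : Equiv.Perm (Fin n)) ≠ 0 := by
      intro hh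
      exact hz1 (pm_injective (sub_eq_zero.mp hh))
    exact Submodule.eq_of_le_of_finrank_eq hle (by rw [finrank_span_singleton hne, hrk])
  -- maximizers are exactly pm 1 and pm z
  have hmaxset : {y ∈ {M : Matrix (Fin n) (Fin n) ℝ | ∃ σ ∈ G, M = σ.permMatrix ℝ} | l y = m}
      = {pm 1, pm z} := by
    apply Set.Subset.antisymm
    · rintro y ⟨⟨σ, hσ, rfl⟩, hy⟩
      have hmem : pm σ - pm 1 ∈ Submodule.span ℝ {pm z - pm 1} := by
        rw [hspan]
        exact vsub_mem_vectorSpan ℝ (hmemF σ hσ hy) h1F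
      obtain ⟨c, hc⟩ := Submodule.mem_span_singleton.mp hmem
      rcases on_line (σ := σ) (z := z) (c := c) hc.symm with rfl | rfl
      · exact Or.inl rfl
      · exact Or.inr rfl
    · rintro y (rfl | rfl)
      · exact ⟨⟨1, one_mem G, rfl⟩, rfl⟩
      · exact ⟨⟨z, hzG, rfl⟩, hzl⟩
  have hFseg : F = segment ℝ (pm 1) (pm z) := by
    rw [hFhull, hmaxset, convexHull_pair]
  -- indecomposability
  refine ⟨z, ⟨hzG, hz1, ?_⟩, hFseg⟩
  rintro ⟨h, hhG, ⟨k, hd, hzk⟩, hh1, hhz⟩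
  have hkG : k ∈ G := by
    have : k = h⁻¹ * z := by rw [hzk]; group
    rw [this]
    exact mul_mem (inv_mem hhG) hzG
  have hmid : pm h + pm k = pm 1 + pm z := by
    rw [midpoint_identity hd, ← hzk]
  have hsum : l (pm h) + l (pm k) = m + m := by
    rw [← map_add, hmid, map_add, ← hm, hzl]
  have hlh : l (pm h) = m := le_antisymm (hVle h hhG) (by
    have := hVle k hkG
    linarith)
  have : pm h ∈ ({pm 1, pm z} : Set (Matrix (Fin n) (Fin n) ℝ)) := by
    rw [← hmaxset]
    exact ⟨⟨h, hhG, rfl⟩, hlh⟩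
  rcases this with hh | hh
  · exact hh1 (pm_injective hh)
  · exact hhz (pm_injective hh)

lemma main (n : ℕ) (G : Subgroup (Equiv.Perm (Fin n))) :
    Set.ncard {h : Equiv.Perm (Fin n) | h ∈ G ∧ h ≠ 1 ∧ ¬ DecomposableIn G h}
      = Set.ncard {F : Set (Matrix (Fin n) (Fin n) ℝ) |
          IsExposed ℝ (permPolytope n G) F ∧
          (1 : Equiv.Perm (Fin n)).permMatrix ℝ ∈ F ∧
          Module.finrank ℝ (vectorSpan ℝ F) = 1} := by
  classical
  set A := {h : Equiv.Perm (Fin n) | h ∈ G ∧ h ≠ 1 ∧ ¬ DecomposableIn G h}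
  have himg : (fun h : Equiv.Perm (Fin n) => segment ℝ (pm 1) (pm h)) '' A
      = {F : Set (Matrix (Fin n) (Fin n) ℝ) |
          IsExposed ℝ (permPolytope n G) F ∧
          (1 : Equiv.Perm (Fin n)).permMatrix ℝ ∈ F ∧
          Module.finrank ℝ (vectorSpan ℝ F) = 1} := by
    apply Set.Subset.antisymm
    · rintro F ⟨z, ⟨hzG, hz1, hind⟩, rfl⟩
      exact forward G hzG hz1 hind
    · rintro F ⟨hexp, h1F, hrk⟩
      obtain ⟨z, hzprop, hFseg⟩ := backward G hexp h1F hrk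
      exact ⟨z, hzprop, hFseg.symm⟩
  have hinj : Set.InjOn (fun h : Equiv.Perm (Fin n) => segment ℝ (pm 1) (pm h)) A := by
    intro z hz w hw he
    change segment ℝ (pm 1) (pm z) = segment ℝ (pm 1) (pm w) at he
    have : pm w ∈ segment ℝ (pm 1) (pm z) := by
      rw [he]
      exact right_mem_segment ℝ _ _
    rcases pm_mem_segment this with hh | hh
    · exact absurd hh hw.2.1
    · exact hh.symm
  rw [← himg, Set.ncard_image_of_injOn hinj]

end PermPolyAux

/-- The number of nontrivial indecomposable elements of `G` equals the number of edges of
`P(G)` containing the vertex corresponding to the identity. -/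
theorem ncard_indecomposable_eq_ncard_edges
    (n : ℕ) (G : Subgroup (Equiv.Perm (Fin n))) :
    Set.ncard {h : Equiv.Perm (Fin n) | h ∈ G ∧ h ≠ 1 ∧ ¬ DecomposableIn G h}
      = Set.ncard {F : Set (Matrix (Fin n) (Fin n) ℝ) |
          IsExposed ℝ (permPolytope n G) F ∧
          (1 : Equiv.Perm (Fin n)).permMatrix ℝ ∈ F ∧
          Module.finrank ℝ (vectorSpan ℝ F) = 1} := by
  exact PermPolyAux.main n G
end

section
/- Let a, b ∈ ℕ. For k ∈ ℕ let L k denote the number of lattice points of the k-th dilate of the product of two unimodular simplices of dimensions a and b, i.e. L k := the number of pairs (u, v) with u : Fin (a+1) → ℕ, v : Fin (b+1) → ℕ, Σ i, u i = k and Σ j, v j = k. Then in the power series ring ℤ⟦t⟧: (1 − t)^(a+b+1) · (Σ_{k=0}^{∞} L k · t^k) = Σ_{i=0}^{min(a,b)} (a.choose i) · (b.choose i) · t^i. Equivalently, for all k ∈ ℕ: (k+a).choose a · (k+b).choose b = Σ_{i=0}^{min(a,b)} (a.choose i) · (b.choose i) · ((k+a+b−i).choose (a+b)). -/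
/-- Trinomial revision, symmetric form. -/
lemma trin_choose (a i j : ℕ) :
    a.choose i * (a - i).choose j = a.choose j * (a - j).choose i := by
  rcases le_or_gt (i + j) a with h | h
  · have h1 := Nat.choose_mul (n := a) (Nat.le_add_right i j)
    have h2 := Nat.choose_mul (n := a) (Nat.le_add_left j i)
    rw [Nat.add_sub_cancel_left] at h1
    rw [Nat.add_sub_cancel] at h2
    rw [← h1, ← h2, Nat.choose_symm_add]
  · rcases le_or_gt i a with hia | hia
    · rcases le_or_gt j a with hja | hja
      · rw [Nat.choose_eq_zero_of_lt (show a - i < j by omega),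
          Nat.choose_eq_zero_of_lt (show a - j < i by omega), mul_zero, mul_zero]
      · rw [Nat.choose_eq_zero_of_lt hja,
          Nat.choose_eq_zero_of_lt (show a - i < j by omega), mul_zero, zero_mul]
    · rw [Nat.choose_eq_zero_of_lt hia,
        Nat.choose_eq_zero_of_lt (show a - j < i by omega), zero_mul, mul_zero]

/-- Vandermonde, "same lower index" form. -/
lemma vand_range (m n : ℕ) :
    ∑ i ∈ Finset.range (n + 1), m.choose i * n.choose i = (m + n).choose n := by
  rw [Nat.add_choose_eq, Finset.Nat.sum_antidiagonal_eq_sum_range_succ_mk]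
  exact Finset.sum_congr rfl fun i hi => by
    rw [Nat.choose_symm (by simpa using Nat.lt_succ_iff.mp (Finset.mem_range.mp hi))]

lemma sum_choose_mul_eq (m n : ℕ) {N : ℕ} (h : n ≤ N ∨ m ≤ N) :
    ∑ i ∈ Finset.range (N + 1), m.choose i * n.choose i = (m + n).choose n := by
  have e1 : ∑ i ∈ Finset.range (N + 1), m.choose i * n.choose i
      = ∑ i ∈ Finset.range (max N n + 1), m.choose i * n.choose i := by
    refine Finset.sum_subset (Finset.range_subset_range.2 (by omega)) fun x hx hnx => ?_
    have hxM : N < x := by simpa using hnx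
    rcases h with hM | hM
    · rw [Nat.choose_eq_zero_of_lt (show n < x by omega), mul_zero]
    · rw [Nat.choose_eq_zero_of_lt (show m < x by omega), zero_mul]
  have e2 : ∑ i ∈ Finset.range (n + 1), m.choose i * n.choose i
      = ∑ i ∈ Finset.range (max N n + 1), m.choose i * n.choose i := by
    refine Finset.sum_subset (Finset.range_subset_range.2 (by omega)) fun x hx hnx => ?_
    have hxn : n < x := by simpa using hnx
    rw [Nat.choose_eq_zero_of_lt hxn, mul_zero]
  rw [e1, ← e2, vand_range]

lemma step_term (a b k j : ℕ) :
    a.choose j * ((a - j + b).choose b * (k + b).choose (a + b - j))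
      = a.choose j * (k.choose (a - j) * (k + b).choose b) := by
  rcases le_or_gt j a with hja | hja
  · rw [show a - j + b = a + b - j by omega]
    rcases le_or_gt (a - j) k with hk | hk
    · have h2 := Nat.choose_mul (n := k + b)
        (show b ≤ a + b - j by omega)
      rw [show k + b - b = k by omega, show a + b - j - b = a - j by omega] at h2
      rw [mul_comm ((a + b - j).choose b), ← mul_assoc, mul_assoc (a.choose j), h2]; ring
    · rw [Nat.choose_eq_zero_of_lt (show k + b < a + b - j by omega),
        Nat.choose_eq_zero_of_lt (show k < a - j by omega), mul_zero, zero_mul, mul_zero]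
  · rw [Nat.choose_eq_zero_of_lt hja, zero_mul, zero_mul]

lemma key_identity (a b k : ℕ) :
    (k + a).choose a * (k + b).choose b
      = ∑ i ∈ Finset.range (min a b + 1),
          a.choose i * b.choose i * ((k + a + b - i).choose (a + b)) := by
  have hext : ∑ i ∈ Finset.range (min a b + 1),
        a.choose i * b.choose i * ((k + a + b - i).choose (a + b))
      = ∑ i ∈ Finset.range (a + 1),
        a.choose i * b.choose i * ((k + a + b - i).choose (a + b)) := by
    refine Finset.sum_subset (Finset.range_subset_range.2 (by omega)) fun x hx hnx => ?_
    have hax : x ≤ a := by simpa [Nat.lt_succ_iff] using hx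
    have hbx : b < x := by simp only [Finset.mem_range, Nat.lt_succ_iff, not_le] at hnx; omega
    rw [Nat.choose_eq_zero_of_lt hbx, mul_zero, zero_mul]
  rw [hext]
  calc (k + a).choose a * (k + b).choose b
      = (k + b).choose b * (a + k).choose a := by rw [mul_comm, Nat.add_comm k a]
    _ = (k + b).choose b * ∑ j ∈ Finset.range (a + b + 1), a.choose j * k.choose (a - j) := by
        congr 1
        rw [Nat.add_choose_eq, Finset.Nat.sum_antidiagonal_eq_sum_range_succ_mk]
        refine Finset.sum_subset (Finset.range_subset_range.2 (by omega)) fun x hx hnx => ?_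
        have : a < x := by simp only [Finset.mem_range, Nat.lt_succ_iff, not_le] at hnx; omega
        rw [Nat.choose_eq_zero_of_lt this, zero_mul]
    _ = ∑ j ∈ Finset.range (a + b + 1),
          a.choose j * (k.choose (a - j) * (k + b).choose b) := by
        rw [Finset.mul_sum]; exact Finset.sum_congr rfl fun j _ => by ring
    _ = ∑ j ∈ Finset.range (a + b + 1),
          a.choose j * ((a - j + b).choose b * (k + b).choose (a + b - j)) := by
        exact Finset.sum_congr rfl fun j _ => (step_term a b k j).symm
    _ = ∑ j ∈ Finset.range (a + b + 1),
          (∑ i ∈ Finset.range (a + 1), a.choose i * b.choose i * (a - i).choose j)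
            * (k + b).choose (a + b - j) := by
        refine Finset.sum_congr rfl fun j _ => ?_
        rw [← mul_assoc]
        congr 1
        calc a.choose j * (a - j + b).choose b
            = a.choose j * ∑ i ∈ Finset.range (a + 1), (a - j).choose i * b.choose i := by
              rw [sum_choose_mul_eq _ _ (Or.inr (by omega))]
          _ = ∑ i ∈ Finset.range (a + 1), a.choose i * b.choose i * (a - i).choose j := by
              rw [Finset.mul_sum]
              refine Finset.sum_congr rfl fun i _ => ?_
              rw [show a.choose j * ((a - j).choose i * b.choose i)
                  = a.choose j * (a - j).choose i * b.choose i by ring, ← trin_choose]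
              ring
    _ = ∑ i ∈ Finset.range (a + 1), ∑ j ∈ Finset.range (a + b + 1),
          a.choose i * b.choose i * (a - i).choose j * (k + b).choose (a + b - j) := by
        rw [Finset.sum_comm]
        exact Finset.sum_congr rfl fun i _ => by rw [Finset.sum_mul]
    _ = ∑ i ∈ Finset.range (a + 1),
          a.choose i * b.choose i * ((k + a + b - i).choose (a + b)) := by
        refine Finset.sum_congr rfl fun i hi => ?_
        have hia : i ≤ a := Nat.lt_succ_iff.mp (Finset.mem_range.mp hi)
        rw [show k + a + b - i = (a - i) + (k + b) by omega, Nat.add_choose_eq,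
          Finset.Nat.sum_antidiagonal_eq_sum_range_succ_mk, Finset.mul_sum]
        exact Finset.sum_congr rfl fun j _ => by ring


lemma card_fixed_sum (m k : ℕ) :
    Nat.card {f : Fin (m + 1) → ℕ // (∑ i, f i) = k} = (k + m).choose m := by
  have e : {f : Fin (m + 1) → ℕ // (∑ i, f i) = k} ≃ Sym (Fin (m + 1)) k :=
    { toFun := fun f => ⟨Finsupp.toMultiset (Finsupp.equivFunOnFinite.symm f.1), by
        rw [Finsupp.card_toMultiset, Finsupp.sum_fintype _ _ (fun _ => rfl)]
        simpa using f.2⟩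
      invFun := fun s => ⟨fun i => Multiset.count i s.1, by
        have h1 : ∀ i : Fin (m + 1),
            Multiset.count i (s.1) = (Multiset.toFinsupp (s.1)) i := fun i => by simp
        have h2 : Multiset.card (Finsupp.toMultiset (Multiset.toFinsupp (s.1)))
            = ∑ x : Fin (m + 1), (Multiset.toFinsupp (s.1)) x := by
          rw [Finsupp.card_toMultiset, Finsupp.sum_fintype _ _ (fun _ => rfl)]
          simp
        simp only [h1]
        rw [← h2, Multiset.toFinsupp_toMultiset]
        exact s.2⟩
      left_inv := fun f => by
        ext i
        simp
      right_inv := fun s => by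
        refine Subtype.ext ?_
        show Finsupp.toMultiset (Finsupp.equivFunOnFinite.symm fun i => Multiset.count i s.1) = s.1
        have h3 : (Finsupp.equivFunOnFinite.symm fun i => Multiset.count i s.1)
            = Multiset.toFinsupp s.1 := by
          ext i; simp
        rw [h3, Multiset.toFinsupp_toMultiset] }
  rw [Nat.card_congr e, Nat.card_eq_fintype_card, Sym.card_sym_eq_choose]
  simp only [Fintype.card_fin]
  rw [show m + 1 + k - 1 = k + m by omega, Nat.choose_symm_add]


open PowerSeries

/-- The number of lattice points in the `k`-th dilate of `Δ_a × Δ_b`, i.e. the number of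
pairs of vectors of naturals with coordinate sums `k`. -/
noncomputable def latticePointCount (a b k : ℕ) : ℕ :=
  Nat.card {p : (Fin (a + 1) → ℕ) × (Fin (b + 1) → ℕ) //
    (∑ i, p.1 i) = k ∧ (∑ j, p.2 j) = k}

lemma latticePointCount_eq (a b k : ℕ) :
    latticePointCount a b k = (k + a).choose a * (k + b).choose b := by
  rw [latticePointCount, Nat.card_congr (Equiv.subtypeProdEquivProd (p := fun u : Fin (a + 1) → ℕ => ∑ i, u i = k) (q := fun v : Fin (b + 1) → ℕ => ∑ j, v j = k)), Nat.card_prod,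
    card_fixed_sum, card_fixed_sum]

/-- The Ehrhart series of a product of unimodular simplices `Δ_a × Δ_b`:
`(1 - t)^(a+b+1) ∑_k L_k t^k = ∑_{i=0}^{min(a,b)} C(a,i) C(b,i) t^i`, equivalently
`C(k+a,a) C(k+b,b) = ∑_{i=0}^{min(a,b)} C(a,i) C(b,i) C(k+a+b-i, a+b)`. -/
theorem ehrhart_series_product_simplices (a b : ℕ) :
    ((1 - X) ^ (a + b + 1) *
        PowerSeries.mk (fun k => (latticePointCount a b k : ℤ))
      = ∑ i ∈ Finset.range (min a b + 1),
          PowerSeries.C ((a.choose i * b.choose i : ℕ) : ℤ) * X ^ i) ∧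
    (∀ k : ℕ,
      (k + a).choose a * (k + b).choose b
        = ∑ i ∈ Finset.range (min a b + 1),
            a.choose i * b.choose i * ((k + a + b - i).choose (a + b))) := by
  refine ⟨?_, fun k => key_identity a b k⟩
  have hmain : PowerSeries.mk (fun k => (latticePointCount a b k : ℤ))
      = (invOneSubPow ℤ (a + b + 1)).val *
        ∑ i ∈ Finset.range (min a b + 1),
          PowerSeries.C ((a.choose i * b.choose i : ℕ) : ℤ) * X ^ i := by
    ext n
    rw [coeff_mk, invOneSubPow_val_succ_eq_mk_add_choose, Finset.mul_sum, map_sum]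
    have hterm : ∀ i, (mk fun n => ((a + b + n).choose (a + b) : ℤ)) *
          (PowerSeries.C ((a.choose i * b.choose i : ℕ) : ℤ) * X ^ i)
        = (PowerSeries.C ((a.choose i * b.choose i : ℕ) : ℤ) *
            mk fun n => ((a + b + n).choose (a + b) : ℤ)) * X ^ i := by
      intro i; ring
    simp only [hterm, coeff_mul_X_pow', coeff_C_mul, coeff_mk]
    rw [latticePointCount_eq]
    have := key_identity a b n
    have hcast : (((n + a).choose a * (n + b).choose b : ℕ) : ℤ)
        = ∑ i ∈ Finset.range (min a b + 1),
            ((a.choose i * b.choose i : ℕ) : ℤ) * ((n + a + b - i).choose (a + b) : ℤ) := by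
      exact_mod_cast congrArg (Nat.cast : ℕ → ℤ) this
    push_cast at hcast ⊢
    rw [hcast]
    refine Finset.sum_congr rfl fun i hi => ?_
    have hia : i ≤ min a b := Nat.lt_succ_iff.mp (Finset.mem_range.mp hi)
    by_cases hin : i ≤ n
    · rw [if_pos hin, show a + b + (n - i) = n + a + b - i by omega]
    · rw [if_neg hin,
        Nat.choose_eq_zero_of_lt (show n + a + b - i < a + b by omega), Nat.cast_zero, mul_zero]
  rw [hmain, ← invOneSubPow_inv_eq_one_sub_pow, ← mul_assoc,
    (invOneSubPow ℤ (a + b + 1)).inv_val, one_mul]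
end
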